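/- arXiv:1002.2190 — 3 statements merged into one kernel-verified Lean document; each statement's English description precedes it below -/
import Mathlib

section
/- Fix an integer p ≥ 1 and real parameters (β_q)_{q≥1} with only finitely many nonzero, and h ∈ ℝ. Let F_N(x) = N^{-1} E log Z_N and ψ_N(x) = N^{-1} log Z_N denote respectively the (averaged) free energy and the random free energy of the mixed p-spin model in which the coefficient β_p of the p-spin term H_p has been replaced by x, and let ⟨·⟩_x be the corresponding Gibbs average. Suppose that: (i) for every x in some open neighborhood of β_p, lim_{N→∞} E|ψ_N(x) − F_N(x)| = 0; (ii) for every x in that neighborhood, F_N(x) converges as N → ∞ to a limit P(x); (iii) P is differentiable at β_p. Then lim_{N→∞} N^{-1} E⟨|H_p(σ) − E⟨H_p(σ)⟩_{β_p}|⟩_{β_p} = 0. -/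
open MeasureTheory ProbabilityTheory Filter

noncomputable section

/-- A spin configuration on `N` sites; `true ↦ +1`, `false ↦ -1`. -/
abbrev Config (N : ℕ) := Fin N → Bool

/-- The spin value of a site. -/
def spin (b : Bool) : ℝ := if b then 1 else -1

variable {Ω : Type*} [MeasurableSpace Ω]

/-- The `p`-spin Hamiltonian
`H_p(σ) = N^{-(p-1)/2} ∑_{i₁,…,i_p} g_{i₁,…,i_p} σ_{i₁}⋯σ_{i_p}`. -/
def Hp (N p : ℕ) (g : (Fin p → Fin N) → Ω → ℝ) (σ : Config N) (ω : Ω) : ℝ :=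
  (N : ℝ) ^ (-(((p : ℝ) - 1) / 2)) *
    ∑ i : Fin p → Fin N, g i ω * ∏ k, spin (σ (i k))

/-- The Boltzmann weight `exp(∑_q β_q H_q(σ) + h ∑_i σ_i)`. -/
def weight (N : ℕ) (β : ℕ → ℝ) (h : ℝ)
    (g : (q : ℕ) → (Fin q → Fin N) → Ω → ℝ) (σ : Config N) (ω : Ω) : ℝ :=
  Real.exp ((∑ᶠ q, β q * Hp N q (g q) σ ω) + h * ∑ i, spin (σ i))

/-- The partition function `Z_N`. -/
def Zpart (N : ℕ) (β : ℕ → ℝ) (h : ℝ)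
    (g : (q : ℕ) → (Fin q → Fin N) → Ω → ℝ) (ω : Ω) : ℝ :=
  ∑ σ : Config N, weight N β h g σ ω

/-- The Gibbs measure `G_N(σ)`. -/
def gibbs (N : ℕ) (β : ℕ → ℝ) (h : ℝ)
    (g : (q : ℕ) → (Fin q → Fin N) → Ω → ℝ) (σ : Config N) (ω : Ω) : ℝ :=
  weight N β h g σ ω / Zpart N β h g ω

/-- The Gibbs average `⟨f⟩` of a (possibly random) function of `n` replicas. -/
def gibbsAvg (N : ℕ) (β : ℕ → ℝ) (h : ℝ)
    (g : (q : ℕ) → (Fin q → Fin N) → Ω → ℝ) (n : ℕ)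
    (f : (Fin n → Config N) → Ω → ℝ) (ω : Ω) : ℝ :=
  ∑ σs : Fin n → Config N, f σs ω * ∏ l, gibbs N β h g (σs l) ω

/-- The overlap `R_{1,2}` of two configurations. -/
def overlapR (N : ℕ) (σ τ : Config N) : ℝ :=
  (N : ℝ)⁻¹ * ∑ i, spin (σ i) * spin (τ i)

/-- The random free energy `ψ_N = N⁻¹ log Z_N`. -/
def psiFE (N : ℕ) (β : ℕ → ℝ) (h : ℝ)
    (g : (q : ℕ) → (Fin q → Fin N) → Ω → ℝ) (ω : Ω) : ℝ :=
  (N : ℝ)⁻¹ * Real.log (Zpart N β h g ω)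

/-- The disorder of the mixed model, for all `p`, is an i.i.d. standard Gaussian family. -/
def IsGaussianDisorder (N : ℕ) (g : (q : ℕ) → (Fin q → Fin N) → Ω → ℝ)
    (μ : Measure Ω) : Prop :=
  (∀ q (i : Fin q → Fin N), Measurable (g q i)) ∧
  (∀ q (i : Fin q → Fin N), Measure.map (g q i) μ = gaussianReal 0 1) ∧
  iIndepFun
    (fun qi : Σ q : ℕ, (Fin q → Fin N) => g qi.1 qi.2) μ

end


noncomputable section Aux
open Real MeasureTheory

def Zf {S : Type*} [Fintype S] (H A : S → ℝ) (t : ℝ) : ℝ := ∑ σ, Real.exp (t * H σ + A σ)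
def Gf {S : Type*} [Fintype S] (H A : S → ℝ) (t : ℝ) : ℝ :=
  (∑ σ, H σ * Real.exp (t * H σ + A σ)) / Zf H A t
def Wf {S : Type*} [Fintype S] (H A : S → ℝ) (c t : ℝ) : ℝ :=
  (∑ σ, |H σ - c| * Real.exp (t * H σ + A σ)) / Zf H A t

section Core
variable {S : Type*} [Fintype S] [Nonempty S]

variable {S : Type*} [Fintype S] [Nonempty S]


lemma Zf_pos (H A : S → ℝ) (t : ℝ) : 0 < Zf H A t :=
  Finset.sum_pos (fun σ _ => Real.exp_pos _) Finset.univ_nonempty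

lemma jensen_exp {ι : Type*} (t : Finset ι) (w a : ι → ℝ) (hw : ∀ i ∈ t, 0 ≤ w i)
    (h1 : ∑ i ∈ t, w i = 1) : Real.exp (∑ i ∈ t, w i * a i) ≤ ∑ i ∈ t, w i * Real.exp (a i) := by
  have := convexOn_exp.map_sum_le (p := a) hw h1 (fun _ _ => Set.mem_univ _)
  simpa [smul_eq_mul] using this

lemma gibbs_jensen (H A : S → ℝ) (t : ℝ) (a : S → ℝ) :
    Real.exp ((∑ σ, a σ * Real.exp (t * H σ + A σ)) / Zf H A t)
      ≤ (∑ σ, Real.exp (a σ) * Real.exp (t * H σ + A σ)) / Zf H A t := by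
  have hZ : 0 < Zf H A t := Zf_pos H A t
  have hw : ∀ σ ∈ (Finset.univ : Finset S), 0 ≤ Real.exp (t * H σ + A σ) / Zf H A t :=
    fun σ _ => div_nonneg (Real.exp_pos _).le hZ.le
  have h1 : ∑ σ, Real.exp (t * H σ + A σ) / Zf H A t = 1 := by
    rw [← Finset.sum_div]; exact div_self hZ.ne'
  have h := jensen_exp Finset.univ (fun σ => Real.exp (t * H σ + A σ) / Zf H A t) a hw h1
  have e1 : ∑ σ, Real.exp (t * H σ + A σ) / Zf H A t * a σ
      = (∑ σ, a σ * Real.exp (t * H σ + A σ)) / Zf H A t := by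
    rw [Finset.sum_div]; exact Finset.sum_congr rfl fun σ _ => by ring
  have e2 : ∑ σ, Real.exp (t * H σ + A σ) / Zf H A t * Real.exp (a σ)
      = (∑ σ, Real.exp (a σ) * Real.exp (t * H σ + A σ)) / Zf H A t := by
    rw [Finset.sum_div]; exact Finset.sum_congr rfl fun σ _ => by ring
  rwa [e1, e2] at h

lemma core_mono (H A : S → ℝ) (t s : ℝ) :
    s * Gf H A t ≤ Real.log (Zf H A (t + s)) - Real.log (Zf H A t) := by
  have hZt := Zf_pos H A t
  have hZts := Zf_pos H A (t + s)
  have h := gibbs_jensen H A t (fun σ => s * H σ)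
  have e1 : (∑ σ, (s * H σ) * Real.exp (t * H σ + A σ)) / Zf H A t = s * Gf H A t := by
    rw [Gf, ← mul_div_assoc, Finset.mul_sum]
    congr 1; exact Finset.sum_congr rfl fun σ _ => by ring
  have e2 : ∑ σ, Real.exp (s * H σ) * Real.exp (t * H σ + A σ) = Zf H A (t + s) := by
    rw [Zf]; exact Finset.sum_congr rfl fun σ _ => by rw [← Real.exp_add]; ring_nf
  rw [e1, e2] at h
  have := Real.log_le_log (Real.exp_pos _) h
  rwa [Real.log_exp, Real.log_div hZts.ne' hZt.ne'] at this

lemma core_key (H A : S → ℝ) (x δ c : ℝ) (hδ : 0 < δ) :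
    δ * Wf H A c x ≤ Real.log 2 +
      max (Real.log (Zf H A (x + δ)) - Real.log (Zf H A x) - δ * c)
          (Real.log (Zf H A (x - δ)) - Real.log (Zf H A x) + δ * c) := by
  have hZx := Zf_pos H A x
  have hZp := Zf_pos H A (x + δ)
  have hZm := Zf_pos H A (x - δ)
  have h := gibbs_jensen H A x (fun σ => δ * |H σ - c|)
  have e1 : (∑ σ, (δ * |H σ - c|) * Real.exp (x * H σ + A σ)) / Zf H A x
      = δ * Wf H A c x := by
    rw [Wf, ← mul_div_assoc, Finset.mul_sum]
    congr 1; exact Finset.sum_congr rfl fun σ _ => by ring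
  rw [e1] at h
  set a : ℝ := Real.exp (-(δ * c)) * (Zf H A (x + δ) / Zf H A x) with ha
  set b : ℝ := Real.exp (δ * c) * (Zf H A (x - δ) / Zf H A x) with hb
  have ha0 : 0 < a := mul_pos (Real.exp_pos _) (div_pos hZp hZx)
  have hb0 : 0 < b := mul_pos (Real.exp_pos _) (div_pos hZm hZx)
  have h2 : (∑ σ, Real.exp (δ * |H σ - c|) * Real.exp (x * H σ + A σ)) / Zf H A x ≤ a + b := by
    have hσ : ∀ σ : S, Real.exp (δ * |H σ - c|) * Real.exp (x * H σ + A σ)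
        ≤ Real.exp (δ * (H σ - c)) * Real.exp (x * H σ + A σ)
          + Real.exp (-(δ * (H σ - c))) * Real.exp (x * H σ + A σ) := by
      intro σ
      have : Real.exp (δ * |H σ - c|) ≤ Real.exp (δ * (H σ - c)) + Real.exp (-(δ * (H σ - c))) := by
        rcases abs_cases (H σ - c) with ⟨he, _⟩ | ⟨he, _⟩
        · rw [he]; nlinarith [Real.exp_pos (-(δ * (H σ - c)))]
        · rw [he, mul_neg, ← neg_mul]
          nlinarith [Real.exp_pos (δ * (H σ - c))]
      nlinarith [Real.exp_pos (x * H σ + A σ), this]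
    have hsum : ∑ σ, Real.exp (δ * |H σ - c|) * Real.exp (x * H σ + A σ)
        ≤ ∑ σ, (Real.exp (δ * (H σ - c)) * Real.exp (x * H σ + A σ)
          + Real.exp (-(δ * (H σ - c))) * Real.exp (x * H σ + A σ)) :=
      Finset.sum_le_sum fun σ _ => hσ σ
    have e3 : ∑ σ, (Real.exp (δ * (H σ - c)) * Real.exp (x * H σ + A σ)
          + Real.exp (-(δ * (H σ - c))) * Real.exp (x * H σ + A σ))
        = Real.exp (-(δ * c)) * Zf H A (x + δ) + Real.exp (δ * c) * Zf H A (x - δ) := by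
      rw [Finset.sum_add_distrib, Zf, Zf, Finset.mul_sum, Finset.mul_sum]
      congr 1
      · exact Finset.sum_congr rfl fun σ _ => by
          rw [← Real.exp_add, ← Real.exp_add]; ring_nf
      · exact Finset.sum_congr rfl fun σ _ => by
          rw [← Real.exp_add, ← Real.exp_add]; ring_nf
    have e4 : a + b = (Real.exp (-(δ * c)) * Zf H A (x + δ)
        + Real.exp (δ * c) * Zf H A (x - δ)) / Zf H A x := by
      rw [ha, hb]; field_simp
    rw [e4]
    gcongr
    exact e3 ▸ hsum
  have h3 : Real.exp (δ * Wf H A c x) ≤ a + b := le_trans h h2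
  have h4 : a + b ≤ 2 * max a b := by
    rcases le_total a b with hab | hab
    · rw [max_eq_right hab]; linarith
    · rw [max_eq_left hab]; linarith
  have h5 : δ * Wf H A c x ≤ Real.log (2 * max a b) := by
    have := Real.log_le_log (Real.exp_pos _) (h3.trans h4)
    rwa [Real.log_exp] at this
  have hmax0 : 0 < max a b := lt_max_of_lt_left ha0
  rw [Real.log_mul two_ne_zero hmax0.ne'] at h5
  have hla : Real.log a = Real.log (Zf H A (x + δ)) - Real.log (Zf H A x) - δ * c := by
    rw [ha, Real.log_mul (Real.exp_pos _).ne' (div_pos hZp hZx).ne', Real.log_exp,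
      Real.log_div hZp.ne' hZx.ne']; ring
  have hlb : Real.log b = Real.log (Zf H A (x - δ)) - Real.log (Zf H A x) + δ * c := by
    rw [hb, Real.log_mul (Real.exp_pos _).ne' (div_pos hZm hZx).ne', Real.log_exp,
      Real.log_div hZm.ne' hZx.ne']; ring
  have hlmax : Real.log (max a b) = max (Real.log a) (Real.log b) := by
    rcases le_total a b with hab | hab
    · rw [max_eq_right hab, max_eq_right (Real.log_le_log ha0 hab)]
    · rw [max_eq_left hab, max_eq_left (Real.log_le_log hb0 hab)]
  rw [hlmax, hla, hlb] at h5
  exact h5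

lemma abs_log_Zf_le (H A : S → ℝ) (t : ℝ) :
    |Real.log (Zf H A t)| ≤ Real.log (Fintype.card S) + ∑ σ, |t * H σ + A σ| := by
  set B := ∑ σ : S, |t * H σ + A σ| with hB
  have hB0 : 0 ≤ B := Finset.sum_nonneg fun σ _ => abs_nonneg _
  have hcard : (1 : ℝ) ≤ Fintype.card S := by exact_mod_cast Fintype.card_pos
  have hlogc : 0 ≤ Real.log (Fintype.card S) := Real.log_nonneg hcard
  have hup : Zf H A t ≤ (Fintype.card S : ℝ) * Real.exp B := by
    rw [Zf]
    calc ∑ σ : S, Real.exp (t * H σ + A σ) ≤ ∑ σ : S, Real.exp B := by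
          refine Finset.sum_le_sum fun σ _ => Real.exp_le_exp.mpr ?_
          exact le_trans (le_abs_self _) (Finset.single_le_sum (f := fun σ => |t * H σ + A σ|)
            (fun σ _ => abs_nonneg _) (Finset.mem_univ σ))
      _ = (Fintype.card S : ℝ) * Real.exp B := by
          rw [Finset.sum_const, Finset.card_univ, nsmul_eq_mul]
  have hlo : Real.exp (-B) ≤ Zf H A t := by
    obtain ⟨σ₀⟩ := (inferInstance : Nonempty S)
    calc Real.exp (-B) ≤ Real.exp (t * H σ₀ + A σ₀) := by
          refine Real.exp_le_exp.mpr ?_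
          have := Finset.single_le_sum (f := fun σ => |t * H σ + A σ|)
            (fun σ _ => abs_nonneg _) (Finset.mem_univ σ₀)
          have := neg_abs_le (t * H σ₀ + A σ₀)
          linarith
      _ ≤ Zf H A t := Finset.single_le_sum (f := fun σ => Real.exp (t * H σ + A σ))
          (fun σ _ => (Real.exp_pos _).le) (Finset.mem_univ σ₀)
  rw [abs_le]
  constructor
  · have := Real.log_le_log (Real.exp_pos _) hlo
    rw [Real.log_exp] at this; linarith
  · have := Real.log_le_log (Zf_pos H A t) hup
    rw [Real.log_mul (by positivity) (Real.exp_pos _).ne', Real.log_exp] at this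
    linarith

lemma abs_ratio_le (H A : S → ℝ) (t : ℝ) (a : S → ℝ) :
    |(∑ σ, a σ * Real.exp (t * H σ + A σ)) / Zf H A t| ≤ ∑ σ, |a σ| := by
  have hZ := Zf_pos H A t
  rw [abs_div, abs_of_pos hZ, div_le_iff₀ hZ]
  calc |∑ σ, a σ * Real.exp (t * H σ + A σ)| ≤ ∑ σ, |a σ| * Real.exp (t * H σ + A σ) := by
        refine (Finset.abs_sum_le_sum_abs _ _).trans ?_
        refine Finset.sum_le_sum fun σ _ => ?_
        rw [abs_mul, abs_of_pos (Real.exp_pos _)]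
    _ ≤ ∑ σ, |a σ| * Zf H A t := by
        refine Finset.sum_le_sum fun σ _ => ?_
        refine mul_le_mul_of_nonneg_left ?_ (abs_nonneg _)
        exact Finset.single_le_sum (f := fun τ => Real.exp (t * H τ + A τ))
          (fun τ _ => (Real.exp_pos _).le) (Finset.mem_univ σ)
    _ = (∑ σ, |a σ|) * Zf H A t := by rw [← Finset.sum_mul]

lemma Wf_nonneg (H A : S → ℝ) (c t : ℝ) : 0 ≤ Wf H A c t :=
  div_nonneg (Finset.sum_nonneg fun σ _ => mul_nonneg (abs_nonneg _) (Real.exp_pos _).le)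
    (Zf_pos H A t).le


end Core


section Bridge
variable (N p : ℕ) (β : ℕ → ℝ) (h : ℝ) (g : (q : ℕ) → (Fin q → Fin N) → Ω → ℝ)

/-- The `ω`-dependent coefficient of `x` -/
def HHp (ω : Ω) (σ : Config N) : ℝ := Hp N p (g p) σ ω
/-- The `ω`-dependent part not involving `β p` -/
def AAp (ω : Ω) (σ : Config N) : ℝ :=
  (∑ᶠ q, Function.update β p 0 q * Hp N q (g q) σ ω) + h * ∑ i, spin (σ i)

variable {β}

lemma finsum_update_mul (hβ : (Function.support β).Finite) (x : ℝ) (c : ℕ → ℝ) :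
    ∑ᶠ q, Function.update β p x q * c q = x * c p + ∑ᶠ q, Function.update β p 0 q * c q := by
  classical
  set s : Finset ℕ := insert p hβ.toFinset with hs
  have hsub : ∀ y : ℝ, (Function.support fun q => Function.update β p y q * c q) ⊆ ↑s := by
    intro y q hq
    by_contra hqs
    have hqp : q ≠ p := fun e => hqs (by simp [hs, e])
    have hqβ : β q = 0 := by
      by_contra hb
      exact hqs (by simp [hs, hβ.mem_toFinset, Function.mem_support, hb])
    rw [Function.mem_support, Function.update_of_ne hqp, hqβ, zero_mul] at hq
    exact hq rfl
  have hps : p ∈ s := by simp [hs]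
  have key : ∀ y : ℝ, ∑ q ∈ s, Function.update β p y q * c q
      = y * c p + ∑ q ∈ s \ {p}, β q * c q := by
    intro y
    rw [Finset.sum_eq_add_sum_sdiff_singleton_of_mem hps]
    rw [Function.update_self]
    congr 1
    refine Finset.sum_congr rfl fun q hq => ?_
    rw [Function.update_of_ne (by simpa using (Finset.mem_sdiff.mp hq).2)]
  rw [finsum_eq_finset_sum_of_support_subset _ (hsub x),
    finsum_eq_finset_sum_of_support_subset _ (hsub 0), key x, key 0]
  ring

lemma weight_update (hβ : (Function.support β).Finite) (x : ℝ) (σ : Config N) (ω : Ω) :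
    weight N (Function.update β p x) h g σ ω
      = Real.exp (x * HHp N p g ω σ + AAp N p β h g ω σ) := by
  rw [weight, finsum_update_mul p hβ x, HHp, AAp]
  congr 1
  ring

lemma Zpart_update (hβ : (Function.support β).Finite) (x : ℝ) (ω : Ω) :
    Zpart N (Function.update β p x) h g ω = Zf (HHp N p g ω) (AAp N p β h g ω) x := by
  rw [Zpart, Zf]
  exact Finset.sum_congr rfl fun σ _ => weight_update N p h g hβ x σ ω

lemma psiFE_update (hβ : (Function.support β).Finite) (x : ℝ) (ω : Ω) :
    psiFE N (Function.update β p x) h g ω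
      = (N : ℝ)⁻¹ * Real.log (Zf (HHp N p g ω) (AAp N p β h g ω) x) := by
  rw [psiFE, Zpart_update N p h g hβ]

lemma gibbsAvg_one (β' : ℕ → ℝ) (f : (Fin 1 → Config N) → Ω → ℝ) (ω : Ω) :
    gibbsAvg N β' h g 1 f ω
      = ∑ σ : Config N, f (fun _ => σ) ω * (weight N β' h g σ ω / Zpart N β' h g ω) := by
  rw [gibbsAvg]
  refine Fintype.sum_equiv (Equiv.funUnique (Fin 1) (Config N)) _ _ fun σs => ?_
  have h1 : (fun _ : Fin 1 => σs 0) = σs := funext fun i => congrArg σs (Subsingleton.elim _ _)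
  simp only [Equiv.funUnique, Equiv.coe_fn_mk, Fin.prod_univ_one, gibbs]
  change f σs ω * _ = f (fun _ => σs default) ω * _
  have h2 : (fun _ : Fin 1 => σs default) = σs :=
    funext fun i => congrArg σs (Subsingleton.elim _ _)
  rw [h2]
  rfl

lemma gibbsAvg_G (hβ : (Function.support β).Finite) (x : ℝ) (ω : Ω) :
    gibbsAvg N (Function.update β p x) h g 1
      (fun τs ω' => Hp N p (g p) (τs 0) ω') ω
      = Gf (HHp N p g ω) (AAp N p β h g ω) x := by
  rw [gibbsAvg_one, Gf, Finset.sum_div]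
  refine Finset.sum_congr rfl fun σ _ => ?_
  rw [Zpart_update N p h g hβ, weight_update N p h g hβ, mul_div_assoc]
  rfl

lemma gibbsAvg_W (hβ : (Function.support β).Finite) (c x : ℝ) (ω : Ω) :
    gibbsAvg N (Function.update β p x) h g 1
      (fun σs ω' => |Hp N p (g p) (σs 0) ω' - c|) ω
      = Wf (HHp N p g ω) (AAp N p β h g ω) c x := by
  rw [gibbsAvg_one, Wf, Finset.sum_div]
  refine Finset.sum_congr rfl fun σ _ => ?_
  rw [Zpart_update N p h g hβ, weight_update N p h g hβ, mul_div_assoc]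
  rfl

end Bridge

section Integr
open Real
variable {Ω : Type*} [MeasurableSpace Ω] {μ : Measure Ω} [IsProbabilityMeasure μ]
variable (N p : ℕ) {β : ℕ → ℝ} (h : ℝ) (g : (q : ℕ) → (Fin q → Fin N) → Ω → ℝ)

lemma meas_Hp (q : ℕ) (hg : ∀ i, Measurable (g q i)) (σ : Config N) :
    Measurable (fun ω => Hp N q (g q) σ ω) := by
  unfold Hp
  exact (Finset.measurable_sum _ fun i _ => (hg i).mul_const _).const_mul _

lemma int_Hp (q : ℕ) (hg : ∀ i, Integrable (g q i) μ) (σ : Config N) :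
    Integrable (fun ω => Hp N q (g q) σ ω) μ := by
  unfold Hp
  exact (integrable_finset_sum _ fun i _ => (hg i).mul_const _).const_mul _

lemma AAp_eq (hβ : (Function.support β).Finite) (ω : Ω) (σ : Config N) :
    AAp N p β h g ω σ = (∑ q ∈ insert p hβ.toFinset,
        Function.update β p 0 q * Hp N q (g q) σ ω) + h * ∑ i, spin (σ i) := by
  rw [AAp]
  congr 1
  refine finsum_eq_finset_sum_of_support_subset _ fun q hq => ?_
  by_contra hqs
  have hqp : q ≠ p := fun e => hqs (by simp [e])
  have hqβ : β q = 0 := by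
    by_contra hb
    exact hqs (by simp [hβ.mem_toFinset, Function.mem_support, hb])
  rw [Function.mem_support, Function.update_of_ne hqp, hqβ, zero_mul] at hq
  exact hq rfl

lemma meas_AAp (hβ : (Function.support β).Finite)
    (hg : ∀ q i, Measurable (g q i)) (σ : Config N) :
    Measurable (fun ω => AAp N p β h g ω σ) := by
  have : (fun ω => AAp N p β h g ω σ) = fun ω => (∑ q ∈ insert p hβ.toFinset,
      Function.update β p 0 q * Hp N q (g q) σ ω) + h * ∑ i, spin (σ i) :=
    funext fun ω => AAp_eq N p h g hβ ω σ
  rw [this]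
  exact (Finset.measurable_sum _ fun q _ =>
    (meas_Hp N g q (hg q) σ).const_mul _).add measurable_const

lemma int_AAp (hβ : (Function.support β).Finite)
    (hg : ∀ q i, Integrable (g q i) μ) (σ : Config N) :
    Integrable (fun ω => AAp N p β h g ω σ) μ := by
  have : (fun ω => AAp N p β h g ω σ) = fun ω => (∑ q ∈ insert p hβ.toFinset,
      Function.update β p 0 q * Hp N q (g q) σ ω) + h * ∑ i, spin (σ i) :=
    funext fun ω => AAp_eq N p h g hβ ω σ
  rw [this]
  exact (integrable_finset_sum _ fun q _ =>
    (int_Hp N g q (hg q) σ).const_mul _).add (integrable_const _)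

lemma meas_Zf (hβ : (Function.support β).Finite)
    (hg : ∀ q i, Measurable (g q i)) (x : ℝ) :
    Measurable (fun ω => Zf (HHp N p g ω) (AAp N p β h g ω) x) := by
  refine Finset.measurable_sum _ fun σ _ => Measurable.exp ?_
  exact ((meas_Hp N g p (hg p) σ).const_mul x).add (meas_AAp N p h g hβ hg σ)

lemma int_logZf (hβ : (Function.support β).Finite)
    (hgm : ∀ q i, Measurable (g q i)) (hgi : ∀ q i, Integrable (g q i) μ) (x : ℝ) :
    Integrable (fun ω => Real.log (Zf (HHp N p g ω) (AAp N p β h g ω) x)) μ := by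
  refine Integrable.mono' (g := fun ω => Real.log (Fintype.card (Config N)) +
      ∑ σ : Config N, |x * HHp N p g ω σ + AAp N p β h g ω σ|) ?_ ?_ ?_
  · refine (integrable_const _).add (integrable_finset_sum _ fun σ _ => ?_)
    exact (((int_Hp N g p (hgi p) σ).const_mul x).add (int_AAp N p h g hβ hgi σ)).abs
  · exact (Real.measurable_log.comp (meas_Zf N p h g hβ hgm x)).aestronglyMeasurable
  · exact Filter.Eventually.of_forall fun ω => by
      simpa [Real.norm_eq_abs] using abs_log_Zf_le (HHp N p g ω) (AAp N p β h g ω) x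

lemma meas_Gf (hβ : (Function.support β).Finite)
    (hg : ∀ q i, Measurable (g q i)) (x : ℝ) :
    Measurable (fun ω => Gf (HHp N p g ω) (AAp N p β h g ω) x) := by
  refine Measurable.div ?_ (meas_Zf N p h g hβ hg x)
  refine Finset.measurable_sum _ fun σ _ => Measurable.mul (meas_Hp N g p (hg p) σ) ?_
  exact Measurable.exp (((meas_Hp N g p (hg p) σ).const_mul x).add (meas_AAp N p h g hβ hg σ))

lemma int_Gf (hβ : (Function.support β).Finite)
    (hgm : ∀ q i, Measurable (g q i)) (hgi : ∀ q i, Integrable (g q i) μ) (x : ℝ) :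
    Integrable (fun ω => Gf (HHp N p g ω) (AAp N p β h g ω) x) μ := by
  refine Integrable.mono' (g := fun ω => ∑ σ : Config N, |HHp N p g ω σ|) ?_ ?_ ?_
  · exact integrable_finset_sum _ fun σ _ => (int_Hp N g p (hgi p) σ).abs
  · exact (meas_Gf N p h g hβ hgm x).aestronglyMeasurable
  · refine Filter.Eventually.of_forall fun ω => ?_
    rw [Real.norm_eq_abs]
    exact abs_ratio_le _ _ x _

lemma meas_Wf (hβ : (Function.support β).Finite)
    (hg : ∀ q i, Measurable (g q i)) (c x : ℝ) :
    Measurable (fun ω => Wf (HHp N p g ω) (AAp N p β h g ω) c x) := by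
  refine Measurable.div ?_ (meas_Zf N p h g hβ hg x)
  refine Finset.measurable_sum _ fun σ _ => Measurable.mul ?_ ?_
  · exact ((meas_Hp N g p (hg p) σ).sub measurable_const).abs
  · exact Measurable.exp (((meas_Hp N g p (hg p) σ).const_mul x).add (meas_AAp N p h g hβ hg σ))

lemma int_Wf (hβ : (Function.support β).Finite)
    (hgm : ∀ q i, Measurable (g q i)) (hgi : ∀ q i, Integrable (g q i) μ) (c x : ℝ) :
    Integrable (fun ω => Wf (HHp N p g ω) (AAp N p β h g ω) c x) μ := by
  refine Integrable.mono' (g := fun ω => ∑ σ : Config N, |HHp N p g ω σ - c|) ?_ ?_ ?_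
  · exact integrable_finset_sum _ fun σ _ => ((int_Hp N g p (hgi p) σ).sub (integrable_const c)).abs
  · exact (meas_Wf N p h g hβ hgm c x).aestronglyMeasurable
  · refine Filter.Eventually.of_forall fun ω => ?_
    have := abs_ratio_le (HHp N p g ω) (AAp N p β h g ω) x (fun σ => |HHp N p g ω σ - c|)
    simp only [abs_abs] at this
    rw [Real.norm_eq_abs]
    exact this

end Integr
section PerN
open Real MeasureTheory

variable {Ω : Type*} [MeasurableSpace Ω]

lemma perN (μ : Measure Ω) [IsProbabilityMeasure μ]
    (N p : ℕ) (hN : 1 ≤ N) (β : ℕ → ℝ) (hβ : (Function.support β).Finite) (h : ℝ)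
    (g : (q : ℕ) → (Fin q → Fin N) → Ω → ℝ)
    (hgm : ∀ q i, Measurable (g q i)) (hgi : ∀ q i, Integrable (g q i) μ)
    (x δ : ℝ) (hδ : 0 < δ) :
    δ * ((N : ℝ)⁻¹ * ∫ ω, gibbsAvg N (Function.update β p x) h g 1
        (fun σs ω' => |Hp N p (g p) (σs 0) ω' -
          ∫ ω'', gibbsAvg N (Function.update β p x) h g 1
            (fun τs ω''' => Hp N p (g p) (τs 0) ω''') ω'' ∂μ|) ω ∂μ)
      ≤ (N : ℝ)⁻¹ * Real.log 2
        + (((∫ ω, psiFE N (Function.update β p (x + δ)) h g ω ∂μ)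
            + (∫ ω, psiFE N (Function.update β p (x - δ)) h g ω ∂μ))
            - 2 * (∫ ω, psiFE N (Function.update β p x) h g ω ∂μ))
        + ((∫ ω, |psiFE N (Function.update β p (x + δ)) h g ω
              - ∫ ω', psiFE N (Function.update β p (x + δ)) h g ω' ∂μ| ∂μ)
          + (∫ ω, |psiFE N (Function.update β p (x - δ)) h g ω
              - ∫ ω', psiFE N (Function.update β p (x - δ)) h g ω' ∂μ| ∂μ)
          + 2 * (∫ ω, |psiFE N (Function.update β p x) h g ω
              - ∫ ω', psiFE N (Function.update β p x) h g ω' ∂μ| ∂μ)) := by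
  have hN0 : (N : ℝ) ≠ 0 := Nat.cast_ne_zero.mpr (by omega)
  have hNinv : (0:ℝ) ≤ (N : ℝ)⁻¹ := by positivity
  -- abbreviations
  set Hf : Ω → Config N → ℝ := HHp N p g with hHf
  set Af : Ω → Config N → ℝ := AAp N p β h g with hAf
  have hintℓ : ∀ y : ℝ, Integrable (fun ω => Real.log (Zf (Hf ω) (Af ω) y)) μ :=
    fun y => int_logZf N p h g hβ hgm hgi y
  have hψ : ∀ (y : ℝ) (ω : Ω), psiFE N (Function.update β p y) h g ω
      = (N:ℝ)⁻¹ * Real.log (Zf (Hf ω) (Af ω) y) :=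
    fun y ω => psiFE_update N p h g hβ y ω
  have hFy : ∀ y : ℝ, ∫ ω, Real.log (Zf (Hf ω) (Af ω) y) ∂μ
      = (N:ℝ) * ∫ ω, psiFE N (Function.update β p y) h g ω ∂μ := by
    intro y
    simp only [hψ]
    rw [integral_const_mul, ← mul_assoc, mul_inv_cancel₀ hN0, one_mul]
  set c : ℝ := ∫ ω, Gf (Hf ω) (Af ω) x ∂μ with hc
  have hintG : Integrable (fun ω => Gf (Hf ω) (Af ω) x) μ := int_Gf N p h g hβ hgm hgi x
  -- convexity bounds on c
  have m1 : δ * c ≤ (∫ ω, Real.log (Zf (Hf ω) (Af ω) (x+δ)) ∂μ)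
      - ∫ ω, Real.log (Zf (Hf ω) (Af ω) x) ∂μ := by
    have pw : ∀ ω, δ * Gf (Hf ω) (Af ω) x
        ≤ Real.log (Zf (Hf ω) (Af ω) (x+δ)) - Real.log (Zf (Hf ω) (Af ω) x) :=
      fun ω => core_mono (Hf ω) (Af ω) x δ
    calc δ * c = ∫ ω, δ * Gf (Hf ω) (Af ω) x ∂μ := (integral_const_mul _ _).symm
      _ ≤ ∫ ω, (Real.log (Zf (Hf ω) (Af ω) (x+δ)) - Real.log (Zf (Hf ω) (Af ω) x)) ∂μ :=
          integral_mono (hintG.const_mul δ) ((hintℓ _).sub (hintℓ _)) pw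
      _ = _ := integral_sub (hintℓ _) (hintℓ _)
  have m2 : (∫ ω, Real.log (Zf (Hf ω) (Af ω) x) ∂μ)
      - (∫ ω, Real.log (Zf (Hf ω) (Af ω) (x-δ)) ∂μ) ≤ δ * c := by
    have pw : ∀ ω, (-δ) * Gf (Hf ω) (Af ω) x
        ≤ Real.log (Zf (Hf ω) (Af ω) (x-δ)) - Real.log (Zf (Hf ω) (Af ω) x) := by
      intro ω
      have := core_mono (Hf ω) (Af ω) x (-δ)
      rwa [show x + -δ = x - δ by ring] at this
    have key : (-δ) * c ≤ (∫ ω, Real.log (Zf (Hf ω) (Af ω) (x-δ)) ∂μ)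
        - ∫ ω, Real.log (Zf (Hf ω) (Af ω) x) ∂μ := by
      calc (-δ) * c = ∫ ω, (-δ) * Gf (Hf ω) (Af ω) x ∂μ := (integral_const_mul _ _).symm
        _ ≤ ∫ ω, (Real.log (Zf (Hf ω) (Af ω) (x-δ)) - Real.log (Zf (Hf ω) (Af ω) x)) ∂μ :=
            integral_mono (hintG.const_mul _) ((hintℓ _).sub (hintℓ _)) pw
        _ = _ := integral_sub (hintℓ _) (hintℓ _)
    linarith
  -- pointwise main bound
  have pw3 : ∀ ω, δ * Wf (Hf ω) (Af ω) c x
      ≤ (Real.log 2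
          + (((∫ ω', Real.log (Zf (Hf ω') (Af ω') (x+δ)) ∂μ)
              + (∫ ω', Real.log (Zf (Hf ω') (Af ω') (x-δ)) ∂μ))
              - 2 * ∫ ω', Real.log (Zf (Hf ω') (Af ω') x) ∂μ))
        + (|Real.log (Zf (Hf ω) (Af ω) (x+δ)) - ∫ ω', Real.log (Zf (Hf ω') (Af ω') (x+δ)) ∂μ|
          + |Real.log (Zf (Hf ω) (Af ω) (x-δ)) - ∫ ω', Real.log (Zf (Hf ω') (Af ω') (x-δ)) ∂μ|
          + 2 * |Real.log (Zf (Hf ω) (Af ω) x) - ∫ ω', Real.log (Zf (Hf ω') (Af ω') x) ∂μ|) := by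
    intro ω
    have hck := core_key (Hf ω) (Af ω) x δ c hδ
    refine hck.trans ?_
    rw [add_assoc, add_le_add_iff_left]
    refine max_le ?_ ?_
    · have a1 := le_abs_self (Real.log (Zf (Hf ω) (Af ω) (x+δ))
        - ∫ ω', Real.log (Zf (Hf ω') (Af ω') (x+δ)) ∂μ)
      have a2 := neg_abs_le (Real.log (Zf (Hf ω) (Af ω) x)
        - ∫ ω', Real.log (Zf (Hf ω') (Af ω') x) ∂μ)
      have a3 := abs_nonneg (Real.log (Zf (Hf ω) (Af ω) (x-δ))
        - ∫ ω', Real.log (Zf (Hf ω') (Af ω') (x-δ)) ∂μ)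
      have a4 := abs_nonneg (Real.log (Zf (Hf ω) (Af ω) x)
        - ∫ ω', Real.log (Zf (Hf ω') (Af ω') x) ∂μ)
      linarith
    · have a1 := le_abs_self (Real.log (Zf (Hf ω) (Af ω) (x-δ))
        - ∫ ω', Real.log (Zf (Hf ω') (Af ω') (x-δ)) ∂μ)
      have a2 := neg_abs_le (Real.log (Zf (Hf ω) (Af ω) x)
        - ∫ ω', Real.log (Zf (Hf ω') (Af ω') x) ∂μ)
      have a3 := abs_nonneg (Real.log (Zf (Hf ω) (Af ω) (x+δ))
        - ∫ ω', Real.log (Zf (Hf ω') (Af ω') (x+δ)) ∂μ)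
      have a4 := abs_nonneg (Real.log (Zf (Hf ω) (Af ω) x)
        - ∫ ω', Real.log (Zf (Hf ω') (Af ω') x) ∂μ)
      linarith
  -- integrate
  have hintW : Integrable (fun ω => Wf (Hf ω) (Af ω) c x) μ := int_Wf N p h g hβ hgm hgi c x
  have hintAbs : ∀ y : ℝ, Integrable (fun ω => |Real.log (Zf (Hf ω) (Af ω) y)
      - ∫ ω', Real.log (Zf (Hf ω') (Af ω') y) ∂μ|) μ :=
    fun y => ((hintℓ y).sub (integrable_const _)).abs
  have s4 : δ * ∫ ω, Wf (Hf ω) (Af ω) c x ∂μ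
      ≤ (Real.log 2
          + (((∫ ω', Real.log (Zf (Hf ω') (Af ω') (x+δ)) ∂μ)
              + (∫ ω', Real.log (Zf (Hf ω') (Af ω') (x-δ)) ∂μ))
              - 2 * ∫ ω', Real.log (Zf (Hf ω') (Af ω') x) ∂μ))
        + ((∫ ω, |Real.log (Zf (Hf ω) (Af ω) (x+δ))
              - ∫ ω', Real.log (Zf (Hf ω') (Af ω') (x+δ)) ∂μ| ∂μ)
          + (∫ ω, |Real.log (Zf (Hf ω) (Af ω) (x-δ))
              - ∫ ω', Real.log (Zf (Hf ω') (Af ω') (x-δ)) ∂μ| ∂μ)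
          + 2 * ∫ ω, |Real.log (Zf (Hf ω) (Af ω) x)
              - ∫ ω', Real.log (Zf (Hf ω') (Af ω') x) ∂μ| ∂μ) := by
    have hRint : Integrable (fun ω =>
        (Real.log 2
          + (((∫ ω', Real.log (Zf (Hf ω') (Af ω') (x+δ)) ∂μ)
              + (∫ ω', Real.log (Zf (Hf ω') (Af ω') (x-δ)) ∂μ))
              - 2 * ∫ ω', Real.log (Zf (Hf ω') (Af ω') x) ∂μ))
        + (|Real.log (Zf (Hf ω) (Af ω) (x+δ)) - ∫ ω', Real.log (Zf (Hf ω') (Af ω') (x+δ)) ∂μ|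
          + |Real.log (Zf (Hf ω) (Af ω) (x-δ)) - ∫ ω', Real.log (Zf (Hf ω') (Af ω') (x-δ)) ∂μ|
          + 2 * |Real.log (Zf (Hf ω) (Af ω) x) - ∫ ω', Real.log (Zf (Hf ω') (Af ω') x) ∂μ|)) μ := by
      exact (integrable_const _).add
        (((hintAbs (x+δ)).add (hintAbs (x-δ))).add ((hintAbs x).const_mul 2))
    have hI := integral_mono (hintW.const_mul δ) hRint pw3
    rw [integral_const_mul] at hI
    refine hI.trans_eq ?_
    have hAB : Integrable (fun ω =>
        |Real.log (Zf (Hf ω) (Af ω) (x+δ)) - ∫ ω', Real.log (Zf (Hf ω') (Af ω') (x+δ)) ∂μ|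
        + |Real.log (Zf (Hf ω) (Af ω) (x-δ)) - ∫ ω', Real.log (Zf (Hf ω') (Af ω') (x-δ)) ∂μ|) μ := by
      exact (hintAbs (x+δ)).add (hintAbs (x-δ))
    have hC2 : Integrable (fun ω =>
        2 * |Real.log (Zf (Hf ω) (Af ω) x) - ∫ ω', Real.log (Zf (Hf ω') (Af ω') x) ∂μ|) μ := by
      exact (hintAbs x).const_mul 2
    have hABC : Integrable (fun ω =>
        (|Real.log (Zf (Hf ω) (Af ω) (x+δ)) - ∫ ω', Real.log (Zf (Hf ω') (Af ω') (x+δ)) ∂μ|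
        + |Real.log (Zf (Hf ω) (Af ω) (x-δ)) - ∫ ω', Real.log (Zf (Hf ω') (Af ω') (x-δ)) ∂μ|)
        + 2 * |Real.log (Zf (Hf ω) (Af ω) x) - ∫ ω', Real.log (Zf (Hf ω') (Af ω') x) ∂μ|) μ := by
      exact hAB.add hC2
    rw [integral_add (integrable_const _) hABC, integral_add hAB hC2,
      integral_add (hintAbs (x+δ)) (hintAbs (x-δ)), integral_const_mul, integral_const]
    simp [measure_univ]
  -- identify the statement's quantities
  have hcin : (∫ ω'', gibbsAvg N (Function.update β p x) h g 1
      (fun τs ω''' => Hp N p (g p) (τs 0) ω''') ω'' ∂μ) = c := by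
    rw [hc]
    exact integral_congr_ae (Filter.Eventually.of_forall fun ω => gibbsAvg_G N p h g hβ x ω)
  have hWin : (fun ω => gibbsAvg N (Function.update β p x) h g 1
      (fun σs ω' => |Hp N p (g p) (σs 0) ω' -
        ∫ ω'', gibbsAvg N (Function.update β p x) h g 1
          (fun τs ω''' => Hp N p (g p) (τs 0) ω''') ω'' ∂μ|) ω)
      = fun ω => Wf (Hf ω) (Af ω) c x := by
    funext ω
    rw [hcin]
    exact gibbsAvg_W N p h g hβ c x ω
  rw [hWin]
  -- abs-difference identities
  have hE : ∀ y : ℝ, (∫ ω, |Real.log (Zf (Hf ω) (Af ω) y)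
      - ∫ ω', Real.log (Zf (Hf ω') (Af ω') y) ∂μ| ∂μ)
      = (N:ℝ) * ∫ ω, |psiFE N (Function.update β p y) h g ω
        - ∫ ω', psiFE N (Function.update β p y) h g ω' ∂μ| ∂μ := by
    intro y
    rw [← integral_const_mul]
    refine integral_congr_ae (Filter.Eventually.of_forall fun ω => ?_)
    simp only [hψ]
    rw [integral_const_mul, ← mul_sub, abs_mul, ← mul_assoc]
    rw [abs_of_nonneg hNinv, mul_inv_cancel₀ hN0, one_mul]
  calc δ * ((N:ℝ)⁻¹ * ∫ ω, Wf (Hf ω) (Af ω) c x ∂μ)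
      = (N:ℝ)⁻¹ * (δ * ∫ ω, Wf (Hf ω) (Af ω) c x ∂μ) := by ring
    _ ≤ (N:ℝ)⁻¹ * ((Real.log 2
          + (((∫ ω', Real.log (Zf (Hf ω') (Af ω') (x+δ)) ∂μ)
              + (∫ ω', Real.log (Zf (Hf ω') (Af ω') (x-δ)) ∂μ))
              - 2 * ∫ ω', Real.log (Zf (Hf ω') (Af ω') x) ∂μ))
        + ((∫ ω, |Real.log (Zf (Hf ω) (Af ω) (x+δ))
              - ∫ ω', Real.log (Zf (Hf ω') (Af ω') (x+δ)) ∂μ| ∂μ)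
          + (∫ ω, |Real.log (Zf (Hf ω) (Af ω) (x-δ))
              - ∫ ω', Real.log (Zf (Hf ω') (Af ω') (x-δ)) ∂μ| ∂μ)
          + 2 * ∫ ω, |Real.log (Zf (Hf ω) (Af ω) x)
              - ∫ ω', Real.log (Zf (Hf ω') (Af ω') x) ∂μ| ∂μ)) :=
        mul_le_mul_of_nonneg_left s4 hNinv
    _ = _ := by
        rw [hE (x+δ), hE (x-δ), hE x, hFy (x+δ), hFy (x-δ), hFy x]
        field_simp

end PerN

lemma integrable_id_gaussian : Integrable (fun x : ℝ => x) (gaussianReal 0 1) := by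
  rw [gaussianReal_of_var_ne_zero 0 one_ne_zero]
  rw [integrable_withDensity_iff (measurable_gaussianPDF 0 1)
    (Filter.Eventually.of_forall fun x => ENNReal.ofReal_lt_top)]
  have h1 : Integrable (fun x : ℝ => x * Real.exp (-(2⁻¹) * x ^ 2)) := by
    simpa [Real.rpow_one] using
      integrable_rpow_mul_exp_neg_mul_sq (by norm_num : (0:ℝ) < 2⁻¹) (by norm_num : (-1:ℝ) < 1)
  have h2 := h1.mul_const ((Real.sqrt (2 * Real.pi * 1))⁻¹)
  apply h2.congr
  filter_upwards with x
  rw [gaussianPDF, ENNReal.toReal_ofReal (gaussianPDFReal_nonneg 0 1 x)]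
  simp only [gaussianPDFReal, NNReal.coe_one]
  rw [show -(x - 0) ^ 2 / (2 * 1) = -(2⁻¹) * x ^ 2 by ring]
  ring


end Aux

/-- If in some open neighborhood of `β_p` the random free energy of the
mixed `p`-spin model (with the coefficient of `H_p` replaced by `x`) concentrates around its
mean, the averaged free energy converges to a limit `P(x)`, and `P` is differentiable at `β_p`,
then `N⁻¹ E⟨|H_p(σ) − E⟨H_p(σ)⟩|⟩ → 0` (Gibbs averages taken at the original parameters). -/
theorem statement0 {Ω : Type*} [MeasurableSpace Ω] (μ : Measure Ω) [IsProbabilityMeasure μ]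
    (p : ℕ) (hp : 1 ≤ p) (β : ℕ → ℝ) (hβ : (Function.support β).Finite) (h : ℝ)
    (g : (N : ℕ) → (q : ℕ) → (Fin q → Fin N) → Ω → ℝ)
    (hg : ∀ N, IsGaussianDisorder N (g N) μ)
    (P : ℝ → ℝ) (ε : ℝ) (hε : 0 < ε)
    (hconc : ∀ x, |x - β p| < ε →
      Tendsto (fun N => ∫ ω, |psiFE N (Function.update β p x) h (g N) ω -
          ∫ ω', psiFE N (Function.update β p x) h (g N) ω' ∂μ| ∂μ) atTop (nhds 0))
    (hF : ∀ x, |x - β p| < ε →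
      Tendsto (fun N => ∫ ω, psiFE N (Function.update β p x) h (g N) ω ∂μ)
        atTop (nhds (P x)))
    (hPdiff : DifferentiableAt ℝ P (β p)) :
    Tendsto (fun N : ℕ => (N : ℝ)⁻¹ * ∫ ω, gibbsAvg N β h (g N) 1
        (fun σs ω' => |Hp N p (g N p) (σs 0) ω' -
          ∫ ω'', gibbsAvg N β h (g N) 1
            (fun τs ω''' => Hp N p (g N p) (τs 0) ω''') ω'' ∂μ|) ω ∂μ)
      atTop (nhds 0) := by
  classical
  have hgm : ∀ N q i, Measurable (g N q i) := fun N => (hg N).1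
  have hgi : ∀ (N q : ℕ) (i : Fin q → Fin N), Integrable (g N q i) μ := by
    intro N q i
    have h1 : Integrable (fun x : ℝ => x) (gaussianReal 0 1) := integrable_id_gaussian
    rw [← (hg N).2.1 q i] at h1
    exact (integrable_map_measure measurable_id.aestronglyMeasurable
      ((hg N).1 q i).aemeasurable).mp h1
  rw [show β = Function.update β p (β p) from (Function.update_eq_self p β).symm]
  set x₀ : ℝ := β p with hx₀
  -- nonnegativity of the target
  have hT0 : ∀ N : ℕ, 0 ≤ (N : ℝ)⁻¹ * ∫ ω, gibbsAvg N (Function.update β p x₀) h (g N) 1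
      (fun σs ω' => |Hp N p (g N p) (σs 0) ω' -
        ∫ ω'', gibbsAvg N (Function.update β p x₀) h (g N) 1
          (fun τs ω''' => Hp N p (g N p) (τs 0) ω''') ω'' ∂μ|) ω ∂μ := by
    intro N
    refine mul_nonneg (by positivity) (integral_nonneg fun ω => ?_)
    refine Finset.sum_nonneg fun σs _ => mul_nonneg (abs_nonneg _)
      (Finset.prod_nonneg fun l _ => ?_)
    exact div_nonneg (Real.exp_pos _).le
      (Finset.sum_nonneg fun τ _ => (Real.exp_pos _).le)
  rw [Metric.tendsto_atTop]
  intro η hη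
  -- choose δ
  obtain ⟨δ, hδ0, hδε, hΔ⟩ : ∃ δ : ℝ, 0 < δ ∧ δ < ε ∧
      P (x₀ + δ) + P (x₀ - δ) - 2 * P x₀ ≤ η / 2 * δ := by
    have hd := hPdiff.hasDerivAt
    rw [hasDerivAt_iff_isLittleO] at hd
    have hev := hd.def (show (0:ℝ) < η/8 by positivity)
    rw [Metric.eventually_nhds_iff] at hev
    obtain ⟨r, hr0, hr⟩ := hev
    refine ⟨min (ε/2) (r/2), by positivity, ?_, ?_⟩
    · calc min (ε/2) (r/2) ≤ ε/2 := min_le_left _ _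
        _ < ε := by linarith
    · set δ := min (ε/2) (r/2) with hδ
      have hδ0 : 0 < δ := by positivity
      have hδr : δ < r := by
        calc δ ≤ r/2 := min_le_right _ _
          _ < r := by linarith
      have e1 := hr (y := x₀ + δ) (by
        rw [Real.dist_eq]
        simpa [abs_of_pos hδ0] using hδr)
      have e2 := hr (y := x₀ - δ) (by
        rw [Real.dist_eq]
        simpa [abs_of_pos hδ0] using hδr)
      rw [Real.norm_eq_abs, Real.norm_eq_abs] at e1 e2
      simp only [add_sub_cancel_left, smul_eq_mul] at e1
      rw [show x₀ - δ - x₀ = -δ by ring] at e2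
      rw [smul_eq_mul] at e2
      rw [abs_of_pos hδ0] at e1
      rw [abs_neg, abs_of_pos hδ0] at e2
      have b1 := (abs_le.mp e1).2
      have b2 := (abs_le.mp e2).2
      nlinarith
  -- the bounding sequence converges
  have hlog2 : Tendsto (fun n : ℕ => (n:ℝ)⁻¹ * Real.log 2) atTop (nhds 0) := by
    simpa using (tendsto_inv_atTop_nhds_zero_nat : Tendsto (fun n : ℕ => (n:ℝ)⁻¹) atTop (nhds 0)).mul_const (Real.log 2)
  have hyp : |x₀ + δ - x₀| < ε := by rw [show x₀ + δ - x₀ = δ by ring, abs_of_pos hδ0]; exact hδε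
  have hym : |x₀ - δ - x₀| < ε := by
    rw [show x₀ - δ - x₀ = -δ by ring, abs_neg, abs_of_pos hδ0]; exact hδε
  have hy0 : |x₀ - x₀| < ε := by simpa using hε
  have hFp := hF (x₀ + δ) hyp
  have hFm := hF (x₀ - δ) hym
  have hF0 := hF x₀ hy0
  have hCp := hconc (x₀ + δ) hyp
  have hCm := hconc (x₀ - δ) hym
  have hC0 := hconc x₀ hy0
  have hR : Tendsto (fun n : ℕ => δ⁻¹ * (((n:ℝ)⁻¹ * Real.log 2)
      + (((∫ ω, psiFE n (Function.update β p (x₀ + δ)) h (g n) ω ∂μ)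
          + (∫ ω, psiFE n (Function.update β p (x₀ - δ)) h (g n) ω ∂μ))
          - 2 * (∫ ω, psiFE n (Function.update β p x₀) h (g n) ω ∂μ))
      + ((∫ ω, |psiFE n (Function.update β p (x₀ + δ)) h (g n) ω
            - ∫ ω', psiFE n (Function.update β p (x₀ + δ)) h (g n) ω' ∂μ| ∂μ)
        + (∫ ω, |psiFE n (Function.update β p (x₀ - δ)) h (g n) ω
            - ∫ ω', psiFE n (Function.update β p (x₀ - δ)) h (g n) ω' ∂μ| ∂μ)
        + 2 * (∫ ω, |psiFE n (Function.update β p x₀) h (g n) ω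
            - ∫ ω', psiFE n (Function.update β p x₀) h (g n) ω' ∂μ| ∂μ)))) atTop
      (nhds (δ⁻¹ * ((0:ℝ) + ((P (x₀ + δ) + P (x₀ - δ)) - 2 * P x₀) + (0 + 0 + 2 * 0)))) := by
    exact ((hlog2.add ((hFp.add hFm).sub (hF0.const_mul 2))).add
      ((hCp.add hCm).add (hC0.const_mul 2))).const_mul δ⁻¹
  have hlim_lt : δ⁻¹ * ((0:ℝ) + ((P (x₀ + δ) + P (x₀ - δ)) - 2 * P x₀) + (0 + 0 + 2 * 0)) < η := by
    have h1 : δ⁻¹ * ((0:ℝ) + ((P (x₀ + δ) + P (x₀ - δ)) - 2 * P x₀) + (0 + 0 + 2 * 0))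
        = (P (x₀ + δ) + P (x₀ - δ) - 2 * P x₀) / δ := by field_simp; ring
    rw [h1]
    rw [div_lt_iff₀ hδ0]
    nlinarith
  have hev2 := hR.eventually (eventually_lt_nhds hlim_lt)
  rw [eventually_atTop] at hev2
  obtain ⟨N₁, hN₁⟩ := hev2
  refine ⟨max N₁ 1, fun n hn => ?_⟩
  have hn1 : 1 ≤ n := le_trans (le_max_right _ _) hn
  have hnN₁ : N₁ ≤ n := le_trans (le_max_left _ _) hn
  rw [Real.dist_eq, sub_zero, abs_of_nonneg (hT0 n)]
  have hkey := perN μ n p hn1 β hβ h (g n) (hgm n) (hgi n) x₀ δ hδ0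
  have hTn : (n : ℝ)⁻¹ * ∫ ω, gibbsAvg n (Function.update β p x₀) h (g n) 1
      (fun σs ω' => |Hp n p (g n p) (σs 0) ω' -
        ∫ ω'', gibbsAvg n (Function.update β p x₀) h (g n) 1
          (fun τs ω''' => Hp n p (g n p) (τs 0) ω''') ω'' ∂μ|) ω ∂μ
      ≤ δ⁻¹ * (((n:ℝ)⁻¹ * Real.log 2)
      + (((∫ ω, psiFE n (Function.update β p (x₀ + δ)) h (g n) ω ∂μ)
          + (∫ ω, psiFE n (Function.update β p (x₀ - δ)) h (g n) ω ∂μ))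
          - 2 * (∫ ω, psiFE n (Function.update β p x₀) h (g n) ω ∂μ))
      + ((∫ ω, |psiFE n (Function.update β p (x₀ + δ)) h (g n) ω
            - ∫ ω', psiFE n (Function.update β p (x₀ + δ)) h (g n) ω' ∂μ| ∂μ)
        + (∫ ω, |psiFE n (Function.update β p (x₀ - δ)) h (g n) ω
            - ∫ ω', psiFE n (Function.update β p (x₀ - δ)) h (g n) ω' ∂μ| ∂μ)
        + 2 * (∫ ω, |psiFE n (Function.update β p x₀) h (g n) ω
            - ∫ ω', psiFE n (Function.update β p x₀) h (g n) ω' ∂μ| ∂μ))) := by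
    have hmul := mul_le_mul_of_nonneg_left hkey (inv_nonneg.mpr hδ0.le)
    rw [← mul_assoc, inv_mul_cancel₀ hδ0.ne', one_mul] at hmul
    exact hmul
  exact lt_of_le_of_lt hTn (hN₁ n hnN₁)
end

section
/- Let Σ be a finite nonempty set, ν a (possibly random) measure on Σ with positive total mass, and A : Σ → ℝ a (possibly random) function with E⟨A²⟩_x < ∞ for all x in [x₀, x₀ + δ] where δ > 0. Then E⟨|A(σ¹) − A(σ²)|⟩_{x₀} ≤ 2·(δ^{−1} ∫_{x₀}^{x₀+δ} E⟨(A(σ) − ⟨A(σ)⟩_x)²⟩_x dx)^{1/2} + 8 ∫_{x₀}^{x₀+δ} E⟨(A(σ) − ⟨A(σ)⟩_x)²⟩_x dx, where σ¹, σ² are independent replicas from the Gibbs measure G_{x₀}. -/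
open MeasureTheory ProbabilityTheory Filter Finset

noncomputable section

variable {Ω : Type*} [MeasurableSpace Ω]

/-- The Gibbs weight `ν(σ) · exp(t A(σ))` of a configuration. -/
def gWeight {S : Type*} (ν : Ω → S → ℝ) (A : Ω → S → ℝ) (t : ℝ) (ω : Ω) (σ : S) : ℝ :=
  ν ω σ * Real.exp (t * A ω σ)

/-- The normalization `Z = ∫ exp(t A(σ)) dν(σ)`. -/
def gZ {S : Type*} [Fintype S] (ν : Ω → S → ℝ) (A : Ω → S → ℝ) (t : ℝ) (ω : Ω) : ℝ :=
  ∑ σ : S, gWeight ν A t ω σ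

/-- The Gibbs measure `G_t` with density proportional to `exp(t A(σ))` w.r.t. `ν`. -/
def gGibbs {S : Type*} [Fintype S] (ν : Ω → S → ℝ) (A : Ω → S → ℝ) (t : ℝ) (ω : Ω)
    (σ : S) : ℝ :=
  gWeight ν A t ω σ / gZ ν A t ω

/-- The Gibbs average `⟨f⟩_t` of a (possibly random) function of `n` replicas. -/
def gAvg {S : Type*} [Fintype S] (ν : Ω → S → ℝ) (A : Ω → S → ℝ) (t : ℝ) (n : ℕ)
    (f : (Fin n → S) → Ω → ℝ) (ω : Ω) : ℝ :=
  ∑ σs : Fin n → S, f σs ω * ∏ l, gGibbs ν A t ω (σs l)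


set_option linter.unusedSectionVars false
set_option maxHeartbeats 2000000

noncomputable section D
variable {S : Type*} [Fintype S] [Nonempty S] (w a : S → ℝ)

def Zc (w a : S → ℝ) (t : ℝ) : ℝ := ∑ σ, w σ * Real.exp (t * a σ)
def pc (w a : S → ℝ) (t : ℝ) (σ : S) : ℝ := w σ * Real.exp (t * a σ) / Zc w a t
def avgc (w a : S → ℝ) (t : ℝ) (f : S → ℝ) : ℝ := ∑ σ, f σ * pc w a t σ
def vc (w a : S → ℝ) (t : ℝ) : ℝ := avgc w a t (fun σ => (a σ - avgc w a t a) ^ 2)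
def gc (w a : S → ℝ) (t : ℝ) : ℝ := ∑ σ, ∑ τ, |a σ - a τ| * (pc w a t σ * pc w a t τ)

variable {w a}

lemma hasDerivAt_Zc (t : ℝ) :
    HasDerivAt (Zc w a) (∑ σ, w σ * (Real.exp (t * a σ) * a σ)) t := by
  apply HasDerivAt.fun_sum
  intro σ _
  exact ((hasDerivAt_mul_const (a σ)).exp).const_mul (w σ)

lemma cont_Zc : Continuous (Zc w a) := by
  apply continuous_finset_sum
  intro σ _
  exact continuous_const.mul ((continuous_id.mul continuous_const).rexp)

lemma Zc_pos' (hw : ∀ σ, 0 ≤ w σ) (hwpos : 0 < ∑ σ, w σ) (t : ℝ) : 0 < Zc w a t := by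
  have h : ∃ σ : S, 0 < w σ := by
    by_contra h
    push_neg at h
    have : ∑ σ, w σ = 0 := Finset.sum_eq_zero fun σ _ => le_antisymm (h σ) (hw σ)
    linarith
  obtain ⟨σ₀, hσ₀⟩ := h
  exact Finset.sum_pos' (fun σ _ => mul_nonneg (hw σ) (Real.exp_pos _).le)
    ⟨σ₀, Finset.mem_univ _, mul_pos hσ₀ (Real.exp_pos _)⟩

section withpos
variable (hw : ∀ σ, 0 ≤ w σ) (hwpos : 0 < ∑ σ, w σ)
include hw hwpos

lemma Zc_deriv_eq (t : ℝ) :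
    (∑ σ, w σ * (Real.exp (t * a σ) * a σ)) = Zc w a t * avgc w a t a := by
  have hZ := (Zc_pos' hw hwpos t (a := a)).ne'
  rw [avgc, Finset.mul_sum]
  apply Finset.sum_congr rfl
  intro σ _
  rw [pc]
  field_simp

lemma hasDerivAt_pc (t : ℝ) (σ : S) :
    HasDerivAt (fun t => pc w a t σ) (pc w a t σ * (a σ - avgc w a t a)) t := by
  have hnum : HasDerivAt (fun t => w σ * Real.exp (t * a σ))
      (w σ * (Real.exp (t * a σ) * a σ)) t :=
    ((hasDerivAt_mul_const (a σ)).exp).const_mul (w σ)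
  have hZ := hasDerivAt_Zc (w := w) (a := a) t
  rw [Zc_deriv_eq hw hwpos t] at hZ
  have hZne := (Zc_pos' hw hwpos t (a := a)).ne'
  have := hnum.fun_div hZ hZne
  refine this.congr_deriv ?_
  rw [pc]
  field_simp

lemma cont_pc (σ : S) : Continuous (fun t => pc w a t σ) := by
  apply Continuous.div
  · exact continuous_const.mul ((continuous_id.mul continuous_const).rexp)
  · exact cont_Zc
  · exact fun t => (Zc_pos' hw hwpos t (a := a)).ne'

lemma cont_avgc (f : S → ℝ) : Continuous (fun t => avgc w a t f) := by
  apply continuous_finset_sum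
  intro σ _
  exact continuous_const.mul (cont_pc hw hwpos σ)

lemma cont_vc : Continuous (vc w a) := by
  have : vc w a = fun t => ∑ σ, (a σ - avgc w a t a) ^ 2 * pc w a t σ := rfl
  rw [this]
  apply continuous_finset_sum
  intro σ _
  exact ((continuous_const.sub (cont_avgc hw hwpos a)).pow 2).mul (cont_pc hw hwpos σ)

def gcD (w a : S → ℝ) (t : ℝ) : ℝ :=
  ∑ σ, ∑ τ, |a σ - a τ| * (pc w a t σ * pc w a t τ *
    ((a σ - avgc w a t a) + (a τ - avgc w a t a)))

lemma hasDerivAt_gc (t : ℝ) : HasDerivAt (gc w a) (gcD w a t) t := by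
  have h : ∀ (σ τ : S), HasDerivAt (fun t => |a σ - a τ| * (pc w a t σ * pc w a t τ))
      (|a σ - a τ| * (pc w a t σ * pc w a t τ *
        ((a σ - avgc w a t a) + (a τ - avgc w a t a)))) t := by
    intro σ τ
    have := ((hasDerivAt_pc (a := a) hw hwpos t σ).mul
      (hasDerivAt_pc (a := a) hw hwpos t τ)).const_mul (|a σ - a τ|)
    refine this.congr_deriv ?_
    ring
  exact HasDerivAt.fun_sum fun σ _ => HasDerivAt.fun_sum fun τ _ => h σ τ

lemma cont_gcD : Continuous (gcD w a) := by
  apply continuous_finset_sum; intro σ _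
  apply continuous_finset_sum; intro τ _
  exact continuous_const.mul (((cont_pc hw hwpos σ).mul (cont_pc hw hwpos τ)).mul
    (((continuous_const.sub (cont_avgc hw hwpos a)).add
      (continuous_const.sub (cont_avgc hw hwpos a)))))

end withpos
end D
noncomputable section E
variable {S : Type*} [Fintype S] [Nonempty S] {w a : S → ℝ}
variable (hw : ∀ σ, 0 ≤ w σ) (hwpos : 0 < ∑ σ, w σ)
include hw hwpos

lemma pc_nonneg (t : ℝ) (σ : S) : 0 ≤ pc w a t σ :=
  div_nonneg (mul_nonneg (hw σ) (Real.exp_pos _).le) (Zc_pos' hw hwpos t).le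

lemma sum_pc (t : ℝ) : ∑ σ, pc w a t σ = 1 := by
  simp only [pc]
  rw [← Finset.sum_div, show (∑ σ, w σ * Real.exp (t * a σ)) = Zc w a t from rfl,
    div_self (Zc_pos' (a := a) hw hwpos t).ne']

lemma avgc_nonneg (t : ℝ) {f : S → ℝ} (hf : ∀ σ, 0 ≤ f σ) : 0 ≤ avgc w a t f :=
  Finset.sum_nonneg fun σ _ => mul_nonneg (hf σ) (pc_nonneg hw hwpos t σ)

lemma avgc_mono (t : ℝ) {f g : S → ℝ} (hfg : ∀ σ, f σ ≤ g σ) :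
    avgc w a t f ≤ avgc w a t g :=
  Finset.sum_le_sum fun σ _ => mul_le_mul_of_nonneg_right (hfg σ) (pc_nonneg hw hwpos t σ)

lemma avgc_var (t : ℝ) (f : S → ℝ) :
    avgc w a t (fun σ => (f σ - avgc w a t f) ^ 2)
      = avgc w a t (fun σ => f σ ^ 2) - (avgc w a t f) ^ 2 := by
  have hp := sum_pc (a := a) (w := w) hw hwpos t
  simp only [avgc]
  set m := ∑ σ, f σ * pc w a t σ with hm
  rw [Finset.sum_congr rfl fun σ (_ : σ ∈ univ) => show (f σ - m) ^ 2 * pc w a t σ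
      = f σ ^ 2 * pc w a t σ - (2 * m) * (f σ * pc w a t σ) + m ^ 2 * pc w a t σ by ring]
  rw [Finset.sum_add_distrib, Finset.sum_sub_distrib, ← Finset.mul_sum, ← Finset.mul_sum, hp]
  ring

lemma sq_avgc_le (t : ℝ) (f : S → ℝ) :
    (avgc w a t f) ^ 2 ≤ avgc w a t (fun σ => f σ ^ 2) := by
  have h := avgc_var (a := a) hw hwpos t f
  have h2 : 0 ≤ avgc w a t (fun σ => (f σ - avgc w a t f) ^ 2) :=
    avgc_nonneg hw hwpos t fun σ => sq_nonneg _
  linarith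

lemma avgc_abs_le_sqrt (t : ℝ) (f : S → ℝ) :
    avgc w a t (fun σ => |f σ|) ≤ Real.sqrt (avgc w a t (fun σ => f σ ^ 2)) := by
  have h := sq_avgc_le (a := a) hw hwpos t (fun σ => |f σ|)
  simp only [sq_abs] at h
  rw [show avgc w a t (fun σ => f σ ^ 2) = (avgc w a t fun σ => |f σ|) ^ 2
      + (avgc w a t (fun σ => f σ ^ 2) - (avgc w a t fun σ => |f σ|) ^ 2) by ring]
  calc (avgc w a t fun σ => |f σ|) ≤ Real.sqrt ((avgc w a t fun σ => |f σ|) ^ 2) := by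
        rw [Real.sqrt_sq (avgc_nonneg hw hwpos t fun σ => abs_nonneg (f σ))]
    _ ≤ _ := Real.sqrt_le_sqrt (by linarith)

lemma vc_nonneg (t : ℝ) : 0 ≤ vc w a t :=
  avgc_nonneg hw hwpos t fun σ => sq_nonneg _

/-- `|g'| ≤ 4 v`. -/
lemma abs_gcD_le (t : ℝ) : |gcD w a t| ≤ 4 * vc w a t := by
  set bar := avgc w a t a with hbar
  set c : S → ℝ := fun σ => |a σ - bar| with hc
  have habs : |gcD w a t| ≤ ∑ σ, ∑ τ, (c σ + c τ) ^ 2 * (pc w a t σ * pc w a t τ) := by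
    refine (Finset.abs_sum_le_sum_abs _ _).trans ?_
    apply Finset.sum_le_sum
    intro σ _
    refine (Finset.abs_sum_le_sum_abs _ _).trans ?_
    apply Finset.sum_le_sum
    intro τ _
    have hpp : 0 ≤ pc w a t σ * pc w a t τ :=
      mul_nonneg (pc_nonneg hw hwpos t σ) (pc_nonneg hw hwpos t τ)
    rw [abs_mul, abs_mul, abs_abs, abs_of_nonneg hpp]
    have h1 : |a σ - a τ| ≤ c σ + c τ := by
      simp only [hc]
      calc |a σ - a τ| = |(a σ - bar) - (a τ - bar)| := by ring_nf
        _ ≤ _ := abs_sub _ _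
    have h2 : |(a σ - bar) + (a τ - bar)| ≤ c σ + c τ := abs_add_le _ _
    calc |a σ - a τ| * (pc w a t σ * pc w a t τ * |(a σ - bar) + (a τ - bar)|)
        ≤ (c σ + c τ) * (pc w a t σ * pc w a t τ * (c σ + c τ)) := by
          apply mul_le_mul h1 _ (by positivity) (by positivity)
          exact mul_le_mul_of_nonneg_left h2 hpp
      _ = (c σ + c τ) ^ 2 * (pc w a t σ * pc w a t τ) := by ring
  have hexp : ∑ σ, ∑ τ, (c σ + c τ) ^ 2 * (pc w a t σ * pc w a t τ)
      = avgc w a t (fun σ => c σ ^ 2) * (∑ τ, pc w a t τ)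
        + 2 * (avgc w a t c * avgc w a t c)
        + (∑ σ, pc w a t σ) * avgc w a t (fun σ => c σ ^ 2) := by
    simp only [avgc]
    rw [Finset.sum_mul_sum, Finset.sum_mul_sum, Finset.sum_mul_sum, Finset.mul_sum]
    rw [← Finset.sum_add_distrib, ← Finset.sum_add_distrib]
    apply Finset.sum_congr rfl
    intro σ _
    rw [Finset.mul_sum, ← Finset.sum_add_distrib, ← Finset.sum_add_distrib]
    exact Finset.sum_congr rfl fun τ _ => by ring
  rw [hexp, sum_pc hw hwpos t] at habs
  have hvar : avgc w a t (fun σ => c σ ^ 2) = vc w a t := by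
    simp only [hc, sq_abs]; rfl
  have hc2 : avgc w a t c * avgc w a t c ≤ avgc w a t (fun σ => c σ ^ 2) := by
    have := sq_avgc_le (a := a) hw hwpos t c
    nlinarith
  rw [hvar] at habs hc2
  calc |gcD w a t| ≤ vc w a t * 1 + 2 * (avgc w a t c * avgc w a t c) + 1 * vc w a t := habs
    _ ≤ 4 * vc w a t := by nlinarith [vc_nonneg (a := a) hw hwpos t]

/-- `g x ≤ 2 √(v x)`. -/
lemma gc_le_sqrt (t : ℝ) : gc w a t ≤ 2 * Real.sqrt (vc w a t) := by
  set bar := avgc w a t a with hbar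
  set c : S → ℝ := fun σ => |a σ - bar| with hc
  have h1 : gc w a t ≤ ∑ σ, ∑ τ, (c σ + c τ) * (pc w a t σ * pc w a t τ) := by
    apply Finset.sum_le_sum; intro σ _
    apply Finset.sum_le_sum; intro τ _
    have hpp : 0 ≤ pc w a t σ * pc w a t τ :=
      mul_nonneg (pc_nonneg hw hwpos t σ) (pc_nonneg hw hwpos t τ)
    apply mul_le_mul_of_nonneg_right _ hpp
    calc |a σ - a τ| = |(a σ - bar) - (a τ - bar)| := by ring_nf
      _ ≤ _ := abs_sub _ _
  have h2 : ∑ σ, ∑ τ, (c σ + c τ) * (pc w a t σ * pc w a t τ)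
      = avgc w a t c * (∑ τ, pc w a t τ) + (∑ σ, pc w a t σ) * avgc w a t c := by
    simp only [avgc]
    rw [Finset.sum_mul_sum, Finset.sum_mul_sum, ← Finset.sum_add_distrib]
    apply Finset.sum_congr rfl
    intro σ _
    rw [← Finset.sum_add_distrib]
    exact Finset.sum_congr rfl fun τ _ => by ring
  rw [h2, sum_pc hw hwpos t, mul_one, one_mul] at h1
  have h3 : avgc w a t c ≤ Real.sqrt (vc w a t) := by
    have := avgc_abs_le_sqrt (a := a) hw hwpos t (fun σ => a σ - bar)
    simpa [hc, vc] using this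
  linarith

/-- FTC estimate: `g x₀ ≤ g x + 4 ∫_{x₀}^{x₀+δ} v`. -/
lemma gc_start_le (x₀ δ x : ℝ) (hx : x ∈ Set.Icc x₀ (x₀ + δ)) :
    gc w a x₀ ≤ gc w a x + 4 * ∫ y in x₀..(x₀ + δ), vc w a y := by
  obtain ⟨hx0, hx1⟩ := hx
  have hcont : Continuous (gcD w a) := cont_gcD hw hwpos
  have hftc : gc w a x - gc w a x₀ = ∫ y in x₀..x, gcD w a y := by
    rw [intervalIntegral.integral_eq_sub_of_hasDerivAt
      (fun y _ => hasDerivAt_gc hw hwpos y) (hcont.intervalIntegrable _ _)]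
  have habs : |∫ y in x₀..x, gcD w a y| ≤ ∫ y in x₀..x, |gcD w a y| := by
    exact intervalIntegral.abs_integral_le_integral_abs hx0
  have hmono : (∫ y in x₀..x, |gcD w a y|) ≤ ∫ y in x₀..x, 4 * vc w a y := by
    apply intervalIntegral.integral_mono_on hx0
    · exact (hcont.abs.intervalIntegrable _ _)
    · exact (continuous_const.mul (cont_vc hw hwpos)).intervalIntegrable _ _
    · intro y _; exact abs_gcD_le hw hwpos y
  have hext : (∫ y in x₀..x, 4 * vc w a y) ≤ ∫ y in x₀..(x₀ + δ), 4 * vc w a y := by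
    rw [← intervalIntegral.integral_add_adjacent_intervals (f := fun y => 4 * vc w a y)
      ((continuous_const.mul (cont_vc hw hwpos)).intervalIntegrable x₀ x :
        IntervalIntegrable (fun y => 4 * vc w a y) volume x₀ x)
      ((continuous_const.mul (cont_vc hw hwpos)).intervalIntegrable x (x₀ + δ) :
        IntervalIntegrable (fun y => 4 * vc w a y) volume x (x₀ + δ))]
    have : 0 ≤ ∫ y in x..(x₀ + δ), 4 * vc w a y :=
      intervalIntegral.integral_nonneg hx1 fun y _ => by
        have := vc_nonneg (a := a) hw hwpos y; linarith
    linarith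
  have h4a : (∫ y in x₀..x, 4 * vc w a y) = 4 * ∫ y in x₀..x, vc w a y :=
    intervalIntegral.integral_const_mul _ _
  have h4b : (∫ y in x₀..(x₀ + δ), 4 * vc w a y) = 4 * ∫ y in x₀..(x₀ + δ), vc w a y :=
    intervalIntegral.integral_const_mul _ _
  rw [h4a] at hmono
  rw [h4a, h4b] at hext
  have habs2 : |gc w a x - gc w a x₀| ≤ 4 * ∫ y in x₀..x, vc w a y := by
    rw [hftc]; exact habs.trans hmono
  have := abs_le.mp habs2
  linarith [this.1]

/-- Pointwise master estimate. -/
lemma pointwise_master (x₀ δ x : ℝ) (hx : x ∈ Set.Icc x₀ (x₀ + δ)) :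
    gc w a x₀ ≤ 2 * Real.sqrt (vc w a x) + 4 * ∫ y in x₀..(x₀ + δ), vc w a y :=
  (gc_start_le hw hwpos x₀ δ x hx).trans (by linarith [gc_le_sqrt (a := a) hw hwpos x])

end E


section AuxHelp
lemma sqrt_le_half_add {v : ℝ} (hv : 0 ≤ v) : Real.sqrt v ≤ (1 + v) / 2 := by
  nlinarith [Real.sq_sqrt hv, Real.sqrt_nonneg v, sq_nonneg (1 - Real.sqrt v)]

lemma integral_sqrt_le {α : Type*} [MeasurableSpace α] (μ : Measure α) [IsFiniteMeasure μ]
    {f : α → ℝ} (hf : Integrable f μ) (h0 : ∀ x, 0 ≤ f x) :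
    ∫ x, Real.sqrt (f x) ∂μ ≤ Real.sqrt ((μ Set.univ).toReal * ∫ x, f x ∂μ) := by
  set M := (μ Set.univ).toReal with hM
  set C := ∫ x, f x ∂μ with hC
  have hM0 : 0 ≤ M := ENNReal.toReal_nonneg
  have hC0 : 0 ≤ C := integral_nonneg h0
  have hsqint : Integrable (fun x => Real.sqrt (f x)) μ := by
    apply Integrable.mono' ((integrable_const 1).add hf |>.div_const 2)
      (Real.continuous_sqrt.comp_aestronglyMeasurable hf.1)
    filter_upwards with x
    rw [Real.norm_eq_abs, abs_of_nonneg (Real.sqrt_nonneg _)]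
    exact (sqrt_le_half_add (h0 x)).trans_eq (by simp)
  rcases eq_or_lt_of_le hC0 with hCz | hCpos
  · have hfz : f =ᵐ[μ] 0 := (integral_eq_zero_iff_of_nonneg h0 hf).mp hCz.symm
    have : ∫ x, Real.sqrt (f x) ∂μ = 0 := by
      rw [integral_eq_zero_iff_of_nonneg (fun x => Real.sqrt_nonneg _) hsqint]
      filter_upwards [hfz] with x hx
      simp [hx]
    rw [this]
    exact Real.sqrt_nonneg _
  rcases eq_or_lt_of_le hM0 with hMz | hMpos
  · have : μ = 0 := by
      have := ENNReal.toReal_eq_zero_iff (μ Set.univ) |>.mp hMz.symm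
      rcases this with h | h
      · exact Measure.measure_univ_eq_zero.mp h
      · exact absurd h (measure_ne_top μ _)
    rw [this]
    simp
  · set s := Real.sqrt (M * C) with hs
    have hMC : 0 < M * C := mul_pos hMpos hCpos
    have hspos : 0 < s := Real.sqrt_pos.mpr hMC
    have hs2 : s ^ 2 = M * C := Real.sq_sqrt hMC.le
    set c := s / M with hc
    have hcpos : 0 < c := div_pos hspos hMpos
    have key : ∀ x, Real.sqrt (f x) ≤ (f x / c + c) / 2 := by
      intro x
      have h1 : 0 ≤ f x + c * c - 2 * c * Real.sqrt (f x) := by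
        nlinarith [sq_nonneg (Real.sqrt (f x) - c), Real.sq_sqrt (h0 x)]
      have h2 : 0 ≤ (f x + c * c - 2 * c * Real.sqrt (f x)) / c := div_nonneg h1 hcpos.le
      have h3 : (f x + c * c - 2 * c * Real.sqrt (f x)) / c
          = f x / c + c - 2 * Real.sqrt (f x) := by field_simp
      rw [h3] at h2
      linarith
    have hint : ∫ x, Real.sqrt (f x) ∂μ ≤ ∫ x, (f x / c + c) / 2 ∂μ := by
      apply integral_mono hsqint _ key
      exact ((hf.div_const c).add (integrable_const c)).div_const 2
    rw [integral_div, integral_add (hf.div_const c) (integrable_const c),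
      integral_div, integral_const] at hint
    have : (C / c + (μ Set.univ).toReal • c) / 2 = s := by
      rw [smul_eq_mul, ← hM, hc]
      field_simp
      nlinarith [hs2]
    exact hint.trans_eq this

end AuxHelp

section AuxCross
variable {S : Type*} [Fintype S] [Nonempty S] {w a : S → ℝ}
lemma cross_le (hw : ∀ σ, 0 ≤ w σ) {f : S → ℝ}
    (hmono : ∀ σ τ, 0 ≤ (a σ - a τ) * (f σ - f τ)) {x y : ℝ} (hxy : x ≤ y) :
    (∑ σ, f σ * (w σ * Real.exp (x * a σ))) * (∑ σ, w σ * Real.exp (y * a σ)) ≤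
    (∑ σ, f σ * (w σ * Real.exp (y * a σ))) * (∑ σ, w σ * Real.exp (x * a σ)) := by
  have key : ∀ σ τ : S, 0 ≤ (f σ - f τ) *
      (Real.exp (y * a σ) * Real.exp (x * a τ) - Real.exp (x * a σ) * Real.exp (y * a τ)) := by
    intro σ τ
    rcases lt_trichotomy (a σ) (a τ) with h | h | h
    · have h1 : Real.exp (y * a σ) * Real.exp (x * a τ) ≤ Real.exp (x * a σ) * Real.exp (y * a τ) := by
        rw [← Real.exp_add, ← Real.exp_add]; apply Real.exp_le_exp.mpr; nlinarith
      have h2 : f σ ≤ f τ := by nlinarith [hmono σ τ]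
      nlinarith
    · rw [h]; ring_nf; nlinarith [Real.exp_pos (x * a τ), Real.exp_pos (y * a τ)]
    · have h1 : Real.exp (x * a σ) * Real.exp (y * a τ) ≤ Real.exp (y * a σ) * Real.exp (x * a τ) := by
        rw [← Real.exp_add, ← Real.exp_add]; apply Real.exp_le_exp.mpr; nlinarith
      have h2 : f τ ≤ f σ := by nlinarith [hmono σ τ]
      nlinarith
  set D : S → S → ℝ := fun σ τ =>
    f σ * (w σ * Real.exp (y * a σ)) * (w τ * Real.exp (x * a τ))
    - f σ * (w σ * Real.exp (x * a σ)) * (w τ * Real.exp (y * a τ)) with hD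
  have hsum : ∀ (g : S → S → ℝ), (∑ σ, ∑ τ, g σ τ) = ∑ σ, ∑ τ, g τ σ := fun g => Finset.sum_comm
  have main : 0 ≤ ∑ σ, ∑ τ, D σ τ := by
    have : (∑ σ, ∑ τ, D σ τ) = (1/2) * ∑ σ, ∑ τ, (D σ τ + D τ σ) := by
      simp only [Finset.sum_add_distrib]
      rw [← hsum fun σ τ => D τ σ]; ring
    rw [this]
    have : ∀ σ τ : S, 0 ≤ D σ τ + D τ σ := by
      intro σ τ
      have h := mul_nonneg (mul_nonneg (hw σ) (hw τ)) (key σ τ)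
      simp only [hD]; nlinarith [h]
    exact mul_nonneg (by norm_num) (Finset.sum_nonneg fun σ _ =>
      Finset.sum_nonneg fun τ _ => this σ τ)
  have expand : (∑ σ, f σ * (w σ * Real.exp (y * a σ))) * (∑ σ, w σ * Real.exp (x * a σ))
      - (∑ σ, f σ * (w σ * Real.exp (x * a σ))) * (∑ σ, w σ * Real.exp (y * a σ))
      = ∑ σ, ∑ τ, D σ τ := by
    rw [Finset.sum_mul_sum, Finset.sum_mul_sum, ← Finset.sum_sub_distrib]
    exact Finset.sum_congr rfl fun σ _ => by rw [← Finset.sum_sub_distrib]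
  linarith [expand ▸ main]

end AuxCross

noncomputable section AuxInterp

variable {S : Type*} [Fintype S] [Nonempty S] {w a : S → ℝ}

def avgc' (w a : S → ℝ) (t : ℝ) (f : S → ℝ) : ℝ :=
  ∑ σ, f σ * (w σ * Real.exp (t * a σ) / Zc w a t)

lemma avgc_eq_div (t : ℝ) (f : S → ℝ) :
    avgc' w a t f = (∑ σ, f σ * (w σ * Real.exp (t * a σ))) / Zc w a t := by
  rw [avgc', Finset.sum_div]
  exact Finset.sum_congr rfl fun σ _ => by ring

lemma avgc_mono_t (hw : ∀ σ, 0 ≤ w σ) (hZx : 0 < Zc w a x) (hZy : 0 < Zc w a y)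
    {f : S → ℝ} (hmono : ∀ σ τ, 0 ≤ (a σ - a τ) * (f σ - f τ)) (hxy : x ≤ y) :
    avgc' w a x f ≤ avgc' w a y f := by
  rw [avgc_eq_div, avgc_eq_div, div_le_div_iff₀ hZx hZy]
  exact cross_le hw hmono hxy

lemma avgc_sq_interp (hw : ∀ σ, 0 ≤ w σ)
    (hZ : ∀ t : ℝ, 0 < Zc w a t) {x₀ x₁ x : ℝ} (h0 : x₀ ≤ x) (h1 : x ≤ x₁) :
    avgc' w a x (fun σ => a σ ^ 2) ≤
      avgc' w a x₀ (fun σ => a σ ^ 2) + avgc' w a x₁ (fun σ => a σ ^ 2) := by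
  set fp : S → ℝ := fun σ => if 0 ≤ a σ then a σ ^ 2 else 0 with hfp
  set fm : S → ℝ := fun σ => if a σ ≤ 0 then a σ ^ 2 else 0 with hfm
  have hsplit : ∀ (σ : S), fp σ + fm σ = a σ ^ 2 := by
    intro σ
    simp only [hfp, hfm]
    rcases lt_trichotomy (a σ) 0 with h | h | h
    · rw [if_neg (not_le.mpr h), if_pos h.le]; ring
    · simp [h]
    · rw [if_pos h.le, if_neg (not_le.mpr h)]; ring
  have havg : ∀ t, avgc' w a t (fun σ => a σ ^ 2) = avgc' w a t fp + avgc' w a t fm := by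
    intro t
    simp only [avgc', ← Finset.sum_add_distrib, ← add_mul]
    exact Finset.sum_congr rfl fun σ _ => by rw [hsplit σ]
  have hmp : ∀ σ τ : S, 0 ≤ (a σ - a τ) * (fp σ - fp τ) := by
    intro σ τ
    simp only [hfp]
    rcases le_total (a σ) (a τ) with h | h
    · rcases le_or_gt 0 (a σ) with h2 | h2
      · rw [if_pos h2, if_pos (h2.trans h)]
        nlinarith [mul_nonneg (mul_self_nonneg (a σ - a τ)) (show (0:ℝ) ≤ a σ + a τ by linarith)]
      · rw [if_neg (not_le.mpr h2)]
        rcases le_or_gt 0 (a τ) with h3 | h3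
        · rw [if_pos h3]
          nlinarith [mul_nonneg (show (0:ℝ) ≤ a τ - a σ by linarith) (sq_nonneg (a τ))]
        · rw [if_neg (not_le.mpr h3)]; simp
    · rcases le_or_gt 0 (a τ) with h2 | h2
      · rw [if_pos (h2.trans h), if_pos h2]
        nlinarith [mul_nonneg (mul_self_nonneg (a σ - a τ)) (show (0:ℝ) ≤ a σ + a τ by linarith)]
      · rw [if_neg (not_le.mpr h2)]
        rcases le_or_gt 0 (a σ) with h3 | h3
        · rw [if_pos h3]
          nlinarith [mul_nonneg (show (0:ℝ) ≤ a σ - a τ by linarith) (sq_nonneg (a σ))]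
        · rw [if_neg (not_le.mpr h3)]; simp
  have hmm : ∀ σ τ : S, 0 ≤ (a σ - a τ) * ((-fm) σ - (-fm) τ) := by
    intro σ τ
    simp only [hfm, Pi.neg_apply]
    rcases le_total (a σ) (a τ) with h | h
    · rcases le_or_gt (a τ) 0 with h2 | h2
      · rw [if_pos h2, if_pos (h.trans h2)]
        nlinarith [mul_nonneg (mul_self_nonneg (a σ - a τ)) (show (0:ℝ) ≤ -(a σ + a τ) by linarith)]
      · rw [if_neg (not_le.mpr h2)]
        rcases le_or_gt (a σ) 0 with h3 | h3
        · rw [if_pos h3]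
          nlinarith [mul_nonneg (show (0:ℝ) ≤ a τ - a σ by linarith) (sq_nonneg (a σ))]
        · rw [if_neg (not_le.mpr h3)]; simp
    · rcases le_or_gt (a σ) 0 with h2 | h2
      · rw [if_pos (h.trans h2), if_pos h2]
        nlinarith [mul_nonneg (mul_self_nonneg (a σ - a τ)) (show (0:ℝ) ≤ -(a σ + a τ) by linarith)]
      · rw [if_neg (not_le.mpr h2)]
        rcases le_or_gt (a τ) 0 with h3 | h3
        · rw [if_pos h3]
          nlinarith [mul_nonneg (show (0:ℝ) ≤ a σ - a τ by linarith) (sq_nonneg (a τ))]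
        · rw [if_neg (not_le.mpr h3)]; simp
  have hp : avgc' w a x fp ≤ avgc' w a x₁ fp := avgc_mono_t hw (hZ x) (hZ x₁) hmp h1
  have hm : avgc' w a x₀ (-fm) ≤ avgc' w a x (-fm) := avgc_mono_t hw (hZ x₀) (hZ x) hmm h0
  have hneg : ∀ t, avgc' w a t (-fm) = - avgc' w a t fm := by
    intro t; simp only [avgc', Pi.neg_apply, neg_mul, Finset.sum_neg_distrib]
  rw [hneg, hneg] at hm
  have hple : ∀ t, avgc' w a t fp ≤ avgc' w a t (fun σ => a σ ^ 2) := by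
    intro t
    apply Finset.sum_le_sum
    intro σ _
    have hpn : 0 ≤ w σ * Real.exp (t * a σ) / Zc w a t :=
      div_nonneg (mul_nonneg (hw σ) (Real.exp_pos _).le) (hZ t).le
    apply mul_le_mul_of_nonneg_right _ hpn
    simp only [hfp]; split
    · exact le_rfl
    · positivity
  have hmle : ∀ t, avgc' w a t fm ≤ avgc' w a t (fun σ => a σ ^ 2) := by
    intro t
    apply Finset.sum_le_sum
    intro σ _
    have hpn : 0 ≤ w σ * Real.exp (t * a σ) / Zc w a t :=
      div_nonneg (mul_nonneg (hw σ) (Real.exp_pos _).le) (hZ t).le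
    apply mul_le_mul_of_nonneg_right _ hpn
    simp only [hfm]; split
    · exact le_rfl
    · positivity
  calc avgc' w a x (fun σ => a σ ^ 2) = avgc' w a x fp + avgc' w a x fm := havg x
    _ ≤ avgc' w a x₁ fp + avgc' w a x₀ fm := by
        have := hple x₁; have := hmle x₀; linarith [hp, hm]
    _ ≤ _ := by linarith [hple x₁, hmle x₀]

end AuxInterp

section ExtraCore
variable {S : Type*} [Fintype S] [Nonempty S] {w a : S → ℝ}

lemma avgc'_eq (t : ℝ) (f : S → ℝ) : avgc' w a t f = avgc w a t f := rfl

lemma gc_nonneg (hw : ∀ σ, 0 ≤ w σ) (hwpos : 0 < ∑ σ, w σ) (t : ℝ) : 0 ≤ gc w a t :=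
  Finset.sum_nonneg fun σ _ => Finset.sum_nonneg fun τ _ =>
    mul_nonneg (abs_nonneg _)
      (mul_nonneg (pc_nonneg hw hwpos t σ) (pc_nonneg hw hwpos t τ))

lemma vc_le_avg_sq (hw : ∀ σ, 0 ≤ w σ) (hwpos : 0 < ∑ σ, w σ) (t : ℝ) :
    vc w a t ≤ avgc w a t (fun σ => a σ ^ 2) := by
  have h := avgc_var (a := a) hw hwpos t a
  have : vc w a t = avgc w a t (fun σ => a σ ^ 2) - (avgc w a t a) ^ 2 := h
  rw [this]
  nlinarith [sq_nonneg (avgc w a t a)]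
end ExtraCore


section AuxBridge
variable {Ω : Type*} [MeasurableSpace Ω]

variable {S : Type*} [Fintype S] [Nonempty S] (ν : Ω → S → ℝ) (A : Ω → S → ℝ)

lemma gGibbs_eq (t : ℝ) (ω : Ω) (σ : S) : gGibbs ν A t ω σ = pc (ν ω) (A ω) t σ := rfl

lemma gAvg_one (t : ℝ) (f : (Fin 1 → S) → Ω → ℝ) (ω : Ω) :
    gAvg ν A t 1 f ω = ∑ σ, f (fun _ => σ) ω * pc (ν ω) (A ω) t σ := by
  rw [gAvg]
  apply Fintype.sum_equiv (Equiv.funUnique (Fin 1) S) _ _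
  intro σs
  rw [Fin.prod_univ_one, gGibbs_eq]
  have hσ : (fun _ : Fin 1 => σs ((Equiv.funUnique (Fin 1) S) σs |> fun _ => 0)) = σs :=
    funext fun l => congrArg σs (Subsingleton.elim _ _)
  show f σs ω * pc (ν ω) (A ω) t (σs 0) = f (fun _ => σs default) ω * pc (ν ω) (A ω) t (σs default)
  have h1 : (fun _ : Fin 1 => σs default) = σs := funext fun l => congrArg σs (Subsingleton.elim _ _)
  rw [h1, show (default : Fin 1) = 0 from rfl]

lemma gAvg_bar (t : ℝ) (ω : Ω) :
    gAvg ν A t 1 (fun τs ω'' => A ω'' (τs 0)) ω = avgc (ν ω) (A ω) t (A ω) := by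
  rw [gAvg_one]; rfl

lemma gAvg_sq (t : ℝ) (ω : Ω) :
    gAvg ν A t 1 (fun σs ω' => (A ω' (σs 0)) ^ 2) ω
      = avgc (ν ω) (A ω) t (fun σ => A ω σ ^ 2) := by
  rw [gAvg_one]; rfl

lemma gAvg_vc (t : ℝ) (ω : Ω) :
    gAvg ν A t 1 (fun σs ω' =>
      (A ω' (σs 0) - gAvg ν A t 1 (fun τs ω'' => A ω'' (τs 0)) ω') ^ 2) ω
      = vc (ν ω) (A ω) t := by
  rw [gAvg_one]
  simp only [gAvg_bar]
  rfl

lemma gAvg_gc (t : ℝ) (ω : Ω) :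
    gAvg ν A t 2 (fun σs ω' => |A ω' (σs 0) - A ω' (σs 1)|) ω = gc (ν ω) (A ω) t := by
  rw [gAvg, gc]
  have step1 : (∑ σs : Fin 2 → S, (fun σs ω' => |A ω' (σs 0) - A ω' (σs 1)|) σs ω
        * ∏ l, gGibbs ν A t ω (σs l))
      = ∑ p : S × S, |A ω p.1 - A ω p.2| * (pc (ν ω) (A ω) t p.1 * pc (ν ω) (A ω) t p.2) := by
    apply Fintype.sum_equiv (finTwoArrowEquiv S) _ _
    intro σs
    rw [Fin.prod_univ_two, gGibbs_eq, gGibbs_eq]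
    rfl
  rw [step1, Fintype.sum_prod_type]

end AuxBridge

section AuxMeas
variable {Ω : Type*} [MeasurableSpace Ω]

variable {S : Type*} [Fintype S] [Nonempty S] {ν : Ω → S → ℝ} {A : Ω → S → ℝ}
variable (hνmeas : ∀ σ, Measurable fun ω => ν ω σ) (hAmeas : ∀ σ, Measurable fun ω => A ω σ)
include hνmeas hAmeas

lemma meas_weight (σ : S) : Measurable fun p : Ω × ℝ => ν p.1 σ * Real.exp (p.2 * A p.1 σ) :=
  ((hνmeas σ).comp measurable_fst).mul
    ((measurable_snd.mul ((hAmeas σ).comp measurable_fst)).exp)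

lemma meas_Zc : Measurable fun p : Ω × ℝ => Zc (ν p.1) (A p.1) p.2 :=
  Finset.measurable_sum _ fun σ _ => meas_weight hνmeas hAmeas σ

lemma meas_pc (σ : S) : Measurable fun p : Ω × ℝ => pc (ν p.1) (A p.1) p.2 σ :=
  (meas_weight hνmeas hAmeas σ).div (meas_Zc hνmeas hAmeas)

lemma meas_avgc_bar : Measurable fun p : Ω × ℝ => avgc (ν p.1) (A p.1) p.2 (A p.1) :=
  Finset.measurable_sum _ fun σ _ =>
    ((hAmeas σ).comp measurable_fst).mul (meas_pc hνmeas hAmeas σ)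

lemma meas_vc : Measurable fun p : Ω × ℝ => vc (ν p.1) (A p.1) p.2 :=
  Finset.measurable_sum _ fun σ _ =>
    ((((hAmeas σ).comp measurable_fst).sub (meas_avgc_bar hνmeas hAmeas)).pow
      measurable_const).mul (meas_pc hνmeas hAmeas σ)

lemma meas_avgc_sq : Measurable fun p : Ω × ℝ => avgc (ν p.1) (A p.1) p.2 (fun σ => A p.1 σ ^ 2) :=
  Finset.measurable_sum _ fun σ _ =>
    (((hAmeas σ).comp measurable_fst).pow measurable_const).mul (meas_pc hνmeas hAmeas σ)

lemma meas_gc (t : ℝ) : Measurable fun ω => gc (ν ω) (A ω) t := by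
  apply Finset.measurable_sum
  intro σ _
  apply Finset.measurable_sum
  intro τ _
  exact (((hAmeas σ).sub (hAmeas τ)).abs).mul
    (((meas_pc hνmeas hAmeas σ).comp (measurable_id.prodMk measurable_const)).mul
     ((meas_pc hνmeas hAmeas τ).comp (measurable_id.prodMk measurable_const)))

end AuxMeas

/-- For a random Gibbs measure on a finite set with `E⟨A²⟩_x < ∞` on
`[x₀, x₀ + δ]`, `δ > 0`:
`E⟨|A(σ¹) − A(σ²)|⟩_{x₀} ≤ 2 (δ⁻¹ ∫_{x₀}^{x₀+δ} E⟨(A − ⟨A⟩_x)²⟩_x dx)^{1/2}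
  + 8 ∫_{x₀}^{x₀+δ} E⟨(A − ⟨A⟩_x)²⟩_x dx`. -/
theorem statement4 {Ω : Type*} [MeasurableSpace Ω] (μ : Measure Ω) [IsProbabilityMeasure μ]
    {S : Type*} [Fintype S] [Nonempty S]
    (ν : Ω → S → ℝ) (A : Ω → S → ℝ)
    (hν0 : ∀ ω σ, 0 ≤ ν ω σ) (hνpos : ∀ ω, 0 < ∑ σ : S, ν ω σ)
    (hνmeas : ∀ σ, Measurable fun ω => ν ω σ)
    (hAmeas : ∀ σ, Measurable fun ω => A ω σ)
    (x₀ δ : ℝ) (hδ : 0 < δ)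
    (hA2 : ∀ x ∈ Set.Icc x₀ (x₀ + δ), Integrable (fun ω =>
      gAvg ν A x 1 (fun σs ω' => (A ω' (σs 0)) ^ 2) ω) μ) :
    (∫ ω, gAvg ν A x₀ 2 (fun σs ω' => |A ω' (σs 0) - A ω' (σs 1)|) ω ∂μ) ≤
      2 * Real.sqrt (δ⁻¹ * ∫ x in x₀..(x₀ + δ),
          (∫ ω, gAvg ν A x 1 (fun σs ω' =>
            (A ω' (σs 0) - gAvg ν A x 1 (fun τs ω'' => A ω'' (τs 0)) ω') ^ 2) ω ∂μ)) +
      8 * ∫ x in x₀..(x₀ + δ),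
          (∫ ω, gAvg ν A x 1 (fun σs ω' =>
            (A ω' (σs 0) - gAvg ν A x 1 (fun τs ω'' => A ω'' (τs 0)) ω') ^ 2) ω ∂μ) := by
  classical
  have hle : x₀ ≤ x₀ + δ := by linarith
  -- rewrite the goal in terms of `gc` and `vc`, and set integrals over `Ioc`
  simp only [gAvg_gc, gAvg_vc]
  rw [intervalIntegral.integral_of_le hle]
  set I : Set ℝ := Set.Ioc x₀ (x₀ + δ) with hI
  have hmeasI : MeasurableSet I := hI ▸ measurableSet_Ioc
  have hvolI : volume I = ENNReal.ofReal δ := by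
    rw [hI, Real.volume_Ioc, add_sub_cancel_left]
  haveI hfinI : IsFiniteMeasure (volume.restrict I) :=
    ⟨by rw [Measure.restrict_apply_univ, hvolI]; exact ENNReal.ofReal_lt_top⟩
  set W : ℝ → Ω → ℝ := fun x ω => vc (ν ω) (A ω) x with hWdef
  set h₀ : Ω → ℝ := fun ω => avgc (ν ω) (A ω) x₀ (fun σ => A ω σ ^ 2) with hh₀
  set h₁ : Ω → ℝ := fun ω => avgc (ν ω) (A ω) (x₀ + δ) (fun σ => A ω σ ^ 2) with hh₁
  -- pointwise facts
  have hWnn : ∀ x ω, 0 ≤ W x ω := fun x ω => vc_nonneg (hν0 ω) (hνpos ω) x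
  have hg0nn : ∀ ω, 0 ≤ gc (ν ω) (A ω) x₀ := fun ω => gc_nonneg (hν0 ω) (hνpos ω) x₀
  have hWle : ∀ ω, ∀ x ∈ Set.Icc x₀ (x₀ + δ), W x ω ≤ h₀ ω + h₁ ω := by
    intro ω x hx
    have h1 := vc_le_avg_sq (a := A ω) (hν0 ω) (hνpos ω) x
    have h2 := avgc_sq_interp (w := ν ω) (a := A ω) (hν0 ω)
      (fun t => Zc_pos' (hν0 ω) (hνpos ω) t) hx.1 hx.2
    rw [avgc'_eq, avgc'_eq, avgc'_eq] at h2
    exact h1.trans h2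
  -- integrability of h₀, h₁
  have hh0int : Integrable h₀ μ := by
    have h := hA2 x₀ ⟨le_refl x₀, hle⟩
    simpa only [gAvg_sq] using h
  have hh1int : Integrable h₁ μ := by
    have h := hA2 (x₀ + δ) ⟨hle, le_refl _⟩
    simpa only [gAvg_sq] using h
  -- measurability
  have mW : Measurable fun p : Ω × ℝ => W p.2 p.1 := meas_vc hνmeas hAmeas
  have mW' : Measurable fun p : ℝ × Ω => W p.1 p.2 := mW.comp measurable_swap
  have mWx : ∀ x, Measurable fun ω => W x ω :=
    fun x => mW.comp (measurable_id.prodMk measurable_const)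
  have msqW : Measurable fun p : Ω × ℝ => Real.sqrt (W p.2 p.1) :=
    Real.continuous_sqrt.measurable.comp mW
  -- sections are integrable over Ω
  have hWint : ∀ x ∈ Set.Icc x₀ (x₀ + δ), Integrable (fun ω => W x ω) μ := by
    intro x hx
    apply Integrable.mono' (hh0int.add hh1int) (mWx x).aestronglyMeasurable
    filter_upwards with ω
    rw [Real.norm_eq_abs, abs_of_nonneg (hWnn x ω)]
    exact hWle ω x hx
  have hIsubIcc : I ⊆ Set.Icc x₀ (x₀ + δ) := hI ▸ Set.Ioc_subset_Icc_self
  -- continuity in x for each ω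
  have hcW : ∀ ω, Continuous fun x => W x ω := fun ω => cont_vc (hν0 ω) (hνpos ω)
  have hcsW : ∀ ω, Continuous fun x => Real.sqrt (W x ω) :=
    fun ω => Real.continuous_sqrt.comp (hcW ω)
  -- integrability in x over I
  have hWIx : ∀ ω, IntegrableOn (fun x => W x ω) I volume :=
    fun ω => hI ▸ (hcW ω).integrableOn_Ioc
  have hsWIx : ∀ ω, IntegrableOn (fun x => Real.sqrt (W x ω)) I volume :=
    fun ω => hI ▸ (hcsW ω).integrableOn_Ioc
  set J : Ω → ℝ := fun ω => ∫ x in I, W x ω with hJdef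
  set K : Ω → ℝ := fun ω => ∫ x in I, Real.sqrt (W x ω) with hKdef
  have hJnn : ∀ ω, 0 ≤ J ω :=
    fun ω => setIntegral_nonneg hmeasI fun x _ => hWnn x ω
  have hKnn : ∀ ω, 0 ≤ K ω :=
    fun ω => setIntegral_nonneg hmeasI fun x _ => Real.sqrt_nonneg _
  have htoReal : (volume I).toReal = δ := by rw [hvolI, ENNReal.toReal_ofReal hδ.le]
  have hconstI : ∀ c : ℝ, IntegrableOn (fun _ : ℝ => c) I volume := by
    intro c
    refine integrableOn_const ?_
    rw [hvolI]; exact ENNReal.ofReal_ne_top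
  have hJb : ∀ ω, J ω ≤ δ * (h₀ ω + h₁ ω) := by
    intro ω
    have := setIntegral_mono_on (hWIx ω) (hconstI (h₀ ω + h₁ ω)) hmeasI
      (fun x hx => hWle ω x (hIsubIcc hx))
    rwa [setIntegral_const, measureReal_def, htoReal, smul_eq_mul] at this
  have hKb : ∀ ω, K ω ≤ δ * ((1 + (h₀ ω + h₁ ω)) / 2) := by
    intro ω
    have hptw : ∀ x ∈ I, Real.sqrt (W x ω) ≤ (1 + (h₀ ω + h₁ ω)) / 2 := by
      intro x hx
      refine (sqrt_le_half_add (hWnn x ω)).trans ?_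
      have := hWle ω x (hIsubIcc hx)
      linarith
    have := setIntegral_mono_on (hsWIx ω) (hconstI _) hmeasI hptw
    rwa [setIntegral_const, measureReal_def, htoReal, smul_eq_mul] at this
  -- strong measurability of J and K
  have hJsm : AEStronglyMeasurable J μ :=
    (mW.stronglyMeasurable.integral_prod_right').aestronglyMeasurable
  have hKsm : AEStronglyMeasurable K μ :=
    (msqW.stronglyMeasurable.integral_prod_right').aestronglyMeasurable
  have hJint : Integrable J μ := by
    apply Integrable.mono' ((hh0int.add hh1int).const_mul δ) hJsm
    filter_upwards with ω
    rw [Real.norm_eq_abs, abs_of_nonneg (hJnn ω)]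
    exact hJb ω
  have hKint : Integrable K μ := by
    apply Integrable.mono'
      ((((integrable_const (1 : ℝ)).add (hh0int.add hh1int)).div_const 2).const_mul δ) hKsm
    filter_upwards with ω
    rw [Real.norm_eq_abs, abs_of_nonneg (hKnn ω)]
    exact hKb ω
  -- per-ω master estimate averaged over I
  have key : ∀ ω, gc (ν ω) (A ω) x₀ ≤ δ⁻¹ * (2 * K ω) + 4 * J ω := by
    intro ω
    have hJeq : (∫ y in x₀..(x₀ + δ), vc (ν ω) (A ω) y) = J ω := by
      rw [intervalIntegral.integral_of_le hle]
    have master : ∀ x ∈ I, gc (ν ω) (A ω) x₀ ≤ 2 * Real.sqrt (W x ω) + 4 * J ω := by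
      intro x hx
      have h := pointwise_master (w := ν ω) (a := A ω) (hν0 ω) (hνpos ω) x₀ δ x (hIsubIcc hx)
      rwa [hJeq] at h
    have hrhsint : IntegrableOn (fun x => 2 * Real.sqrt (W x ω) + 4 * J ω) I volume :=
      ((hsWIx ω).const_mul 2).add (hconstI (4 * J ω))
    have h2 := setIntegral_mono_on (hconstI (gc (ν ω) (A ω) x₀)) hrhsint hmeasI master
    rw [setIntegral_const, measureReal_def, htoReal, smul_eq_mul] at h2
    rw [integral_add ((hsWIx ω).const_mul 2) (hconstI (4 * J ω)),
      integral_const_mul, setIntegral_const, measureReal_def, htoReal, smul_eq_mul] at h2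
    have hδ' : 0 < δ := hδ
    rw [show (∫ x in I, Real.sqrt (W x ω)) = K ω from rfl] at h2
    have := mul_le_mul_of_nonneg_left h2 (inv_nonneg.mpr hδ.le)
    calc gc (ν ω) (A ω) x₀ = δ⁻¹ * (δ * gc (ν ω) (A ω) x₀) := by field_simp
      _ ≤ δ⁻¹ * (2 * K ω + δ * (4 * J ω)) := this
      _ = δ⁻¹ * (2 * K ω) + 4 * J ω := by field_simp
  -- expectation of the master estimate
  have stepA : (∫ ω, gc (ν ω) (A ω) x₀ ∂μ) ≤ ∫ ω, (δ⁻¹ * (2 * K ω) + 4 * J ω) ∂μ := by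
    apply integral_mono_of_nonneg (ae_of_all _ hg0nn)
      (((hKint.const_mul 2).const_mul δ⁻¹).add (hJint.const_mul 4)) (ae_of_all _ key)
  have stepB : (∫ ω, (δ⁻¹ * (2 * K ω) + 4 * J ω) ∂μ)
      = 2 * δ⁻¹ * (∫ ω, K ω ∂μ) + 4 * (∫ ω, J ω ∂μ) := by
    rw [integral_add ((hKint.const_mul 2).const_mul δ⁻¹) (hJint.const_mul 4),
      integral_const_mul, integral_const_mul, integral_const_mul]
    ring
  -- Fubini
  have swapJ : (∫ ω, J ω ∂μ) = ∫ x in I, (∫ ω, W x ω ∂μ) := by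
    apply integral_integral_swap
    have hsm : AEStronglyMeasurable (Function.uncurry fun ω x => W x ω)
        (μ.prod (volume.restrict I)) := mW.stronglyMeasurable.aestronglyMeasurable
    refine (integrable_prod_iff hsm).2 ⟨ae_of_all _ fun ω => hWIx ω, ?_⟩
    apply Integrable.congr hJint
    filter_upwards with ω
    show J ω = ∫ x in I, ‖W x ω‖
    rw [show (fun x => ‖W x ω‖) = fun x => W x ω from
      funext fun x => by rw [Real.norm_eq_abs, abs_of_nonneg (hWnn x ω)]]
  have swapK : (∫ ω, K ω ∂μ) = ∫ x in I, (∫ ω, Real.sqrt (W x ω) ∂μ) := by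
    apply integral_integral_swap
    have hsm : AEStronglyMeasurable (Function.uncurry fun ω x => Real.sqrt (W x ω))
        (μ.prod (volume.restrict I)) := msqW.stronglyMeasurable.aestronglyMeasurable
    refine (integrable_prod_iff hsm).2 ⟨ae_of_all _ fun ω => hsWIx ω, ?_⟩
    apply Integrable.congr hKint
    filter_upwards with ω
    show K ω = ∫ x in I, ‖Real.sqrt (W x ω)‖
    rw [show (fun x => ‖Real.sqrt (W x ω)‖) = fun x => Real.sqrt (W x ω) from
      funext fun x => by rw [Real.norm_eq_abs, abs_of_nonneg (Real.sqrt_nonneg _)]]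
  -- inner estimates in x
  set C₀ : ℝ := ∫ ω, (h₀ ω + h₁ ω) ∂μ with hC₀
  set EW : ℝ → ℝ := fun x => ∫ ω, W x ω ∂μ with hEW
  set EsW : ℝ → ℝ := fun x => ∫ ω, Real.sqrt (W x ω) ∂μ with hEsW
  have hEWnn : ∀ x, 0 ≤ EW x := fun x => integral_nonneg fun ω => hWnn x ω
  have hEsWnn : ∀ x, 0 ≤ EsW x := fun x => integral_nonneg fun ω => Real.sqrt_nonneg _
  have hEWle : ∀ x ∈ Set.Icc x₀ (x₀ + δ), EW x ≤ C₀ := by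
    intro x hx
    exact integral_mono (hWint x hx) (hh0int.add hh1int) fun ω => hWle ω x hx
  have hEWsm : StronglyMeasurable EW :=
    (mW'.stronglyMeasurable.integral_prod_right')
  have hEsWsm : StronglyMeasurable EsW :=
    ((Real.continuous_sqrt.measurable.comp mW').stronglyMeasurable.integral_prod_right')
  have haeI : ∀ᵐ x ∂(volume.restrict I), x ∈ I := ae_restrict_mem hmeasI
  have hEWint : IntegrableOn EW I volume := by
    apply Integrable.mono' (hconstI C₀) hEWsm.aestronglyMeasurable
    filter_upwards [haeI] with x hx
    rw [Real.norm_eq_abs, abs_of_nonneg (hEWnn x)]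
    exact hEWle x (hIsubIcc hx)
  have hstep9 : ∀ x ∈ I, EsW x ≤ Real.sqrt (EW x) := by
    intro x hx
    have h := integral_sqrt_le μ (hWint x (hIsubIcc hx)) (fun ω => hWnn x ω)
    simpa [measure_univ] using h
  have hmono1 : (∫ x in I, EsW x) ≤ ∫ x in I, Real.sqrt (EW x) := by
    refine setIntegral_mono_on ?_ ?_ hmeasI hstep9
    · apply Integrable.mono' (hconstI ((1 + C₀) / 2)) hEsWsm.aestronglyMeasurable
      filter_upwards [haeI] with x hx
      rw [Real.norm_eq_abs, abs_of_nonneg (hEsWnn x)]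
      refine (hstep9 x hx).trans ((sqrt_le_half_add (hEWnn x)).trans ?_)
      have := hEWle x (hIsubIcc hx); linarith
    · apply Integrable.mono' (hconstI ((1 + C₀) / 2))
        (Real.continuous_sqrt.comp_stronglyMeasurable hEWsm).aestronglyMeasurable
      filter_upwards [haeI] with x hx
      rw [Real.norm_eq_abs, abs_of_nonneg (Real.sqrt_nonneg _)]
      refine (sqrt_le_half_add (hEWnn x)).trans ?_
      have := hEWle x (hIsubIcc hx); linarith
  have hstep11 : (∫ x in I, Real.sqrt (EW x)) ≤ Real.sqrt (δ * ∫ x in I, EW x) := by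
    have h := integral_sqrt_le (volume.restrict I) hEWint hEWnn
    rwa [Measure.restrict_apply_univ, hvolI, ENNReal.toReal_ofReal hδ.le] at h
  set T : ℝ := ∫ x in I, EW x with hT
  have hTnn : 0 ≤ T := setIntegral_nonneg hmeasI fun x _ => hEWnn x
  have halg : δ⁻¹ * Real.sqrt (δ * T) = Real.sqrt (δ⁻¹ * T) := by
    rw [show δ⁻¹ * T = δ⁻¹ ^ 2 * (δ * T) by field_simp,
      Real.sqrt_mul (sq_nonneg _), Real.sqrt_sq (inv_nonneg.mpr hδ.le)]
  -- final chain
  calc (∫ ω, gc (ν ω) (A ω) x₀ ∂μ)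
      ≤ 2 * δ⁻¹ * (∫ ω, K ω ∂μ) + 4 * (∫ ω, J ω ∂μ) := stepA.trans_eq stepB
    _ = 2 * δ⁻¹ * (∫ x in I, EsW x) + 4 * T := by rw [swapK, swapJ]
    _ ≤ 2 * δ⁻¹ * Real.sqrt (δ * T) + 4 * T := by
        have h1 := hmono1.trans hstep11
        have h2 : (0:ℝ) ≤ 2 * δ⁻¹ := by positivity
        nlinarith
    _ = 2 * Real.sqrt (δ⁻¹ * T) + 4 * T := by rw [mul_assoc, halg]
    _ ≤ 2 * Real.sqrt (δ⁻¹ * T) + 8 * T := by linarith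


end
end

section
/- Fix an integer p ≥ 1, real parameters (β_q)_{q≥1} with only finitely many nonzero, h ∈ ℝ, and β_p' > β_p with δ = β_p' − β_p. Define Δ_N = N^{−1} ∫_{β_p}^{β_p'} E⟨(H_p(σ) − ⟨H_p(σ)⟩_x)²⟩_x dx. Then N^{−1} E⟨|H_p(σ) − ⟨H_p(σ)⟩_{β_p}|⟩_{β_p} ≤ N^{−1} E⟨|H_p(σ¹) − H_p(σ²)|⟩_{β_p} ≤ 2√(Δ_N/(Nδ)) + 8Δ_N. -/
open MeasureTheory ProbabilityTheory Filter

set_option linter.unusedSectionVars false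
set_option linter.unusedVariables false
set_option maxHeartbeats 1000000

namespace S5

variable {Ω : Type*} [MeasurableSpace Ω]
variable {S : Type*} [Fintype S] [Nonempty S]

noncomputable def gw (Hf C : S → Ω → ℝ) (x : ℝ) (σ : S) (ω : Ω) : ℝ :=
  Real.exp (x * Hf σ ω + C σ ω)

noncomputable def gZ (Hf C : S → Ω → ℝ) (x : ℝ) (ω : Ω) : ℝ := ∑ σ, gw Hf C x σ ω

noncomputable def gG (Hf C : S → Ω → ℝ) (x : ℝ) (σ : S) (ω : Ω) : ℝ :=
  gw Hf C x σ ω / gZ Hf C x ω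

noncomputable def gm (Hf C : S → Ω → ℝ) (x : ℝ) (ω : Ω) : ℝ :=
  ∑ σ, gG Hf C x σ ω * Hf σ ω

noncomputable def gV (Hf C : S → Ω → ℝ) (x : ℝ) (ω : Ω) : ℝ :=
  ∑ σ, gG Hf C x σ ω * (Hf σ ω - gm Hf C x ω) ^ 2

noncomputable def gA (Hf C : S → Ω → ℝ) (x : ℝ) (ω : Ω) : ℝ :=
  ∑ σ, gG Hf C x σ ω * |Hf σ ω - gm Hf C x ω|

noncomputable def gD (Hf C : S → Ω → ℝ) (x : ℝ) (ω : Ω) : ℝ :=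
  ∑ σ, ∑ τ, gG Hf C x σ ω * gG Hf C x τ ω * |Hf σ ω - Hf τ ω|

noncomputable def gE2 (Hf C : S → Ω → ℝ) (x : ℝ) (ω : Ω) : ℝ :=
  ∑ σ, ∑ τ, gG Hf C x σ ω * gG Hf C x τ ω *
    ((Hf σ ω + Hf τ ω - 2 * gm Hf C x ω) * |Hf σ ω - Hf τ ω|)

variable {Hf C : S → Ω → ℝ}

lemma gw_pos (x : ℝ) (σ : S) (ω : Ω) : 0 < gw Hf C x σ ω := Real.exp_pos _

lemma gZ_pos (x : ℝ) (ω : Ω) : 0 < gZ Hf C x ω :=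
  Finset.sum_pos (fun σ _ => gw_pos x σ ω) Finset.univ_nonempty

lemma gZ_ne (x : ℝ) (ω : Ω) : gZ Hf C x ω ≠ 0 := (gZ_pos x ω).ne'

lemma gG_nonneg (x : ℝ) (σ : S) (ω : Ω) : 0 ≤ gG Hf C x σ ω :=
  div_nonneg (gw_pos x σ ω).le (gZ_pos x ω).le

lemma gG_sum (x : ℝ) (ω : Ω) : ∑ σ, gG Hf C x σ ω = 1 := by
  simp only [gG, ← Finset.sum_div]
  exact div_self (gZ_ne x ω)

/-- centered first moment vanishes -/
lemma gG_centered (x : ℝ) (ω : Ω) :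
    ∑ σ, gG Hf C x σ ω * (Hf σ ω - gm Hf C x ω) = 0 := by
  have h1 : ∑ σ, gG Hf C x σ ω * (Hf σ ω - gm Hf C x ω)
      = (∑ σ, gG Hf C x σ ω * Hf σ ω) - (∑ σ, gG Hf C x σ ω) * gm Hf C x ω := by
    rw [Finset.sum_mul]
    rw [← Finset.sum_sub_distrib]
    exact Finset.sum_congr rfl fun σ _ => by ring
  rw [h1, gG_sum, gm]; ring

/-- gA ≤ gD pointwise -/
lemma gA_le_gD (x : ℝ) (ω : Ω) : gA Hf C x ω ≤ gD Hf C x ω := by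
  apply Finset.sum_le_sum
  intro σ _
  have key : Hf σ ω - gm Hf C x ω = ∑ τ, gG Hf C x τ ω * (Hf σ ω - Hf τ ω) := by
    have : ∑ τ, gG Hf C x τ ω * (Hf σ ω - Hf τ ω)
        = (∑ τ, gG Hf C x τ ω) * Hf σ ω - ∑ τ, gG Hf C x τ ω * Hf τ ω := by
      rw [Finset.sum_mul, ← Finset.sum_sub_distrib]
      exact Finset.sum_congr rfl fun τ _ => by ring
    rw [this, gG_sum, gm]; ring
  calc gG Hf C x σ ω * |Hf σ ω - gm Hf C x ω|
      ≤ gG Hf C x σ ω * ∑ τ, gG Hf C x τ ω * |Hf σ ω - Hf τ ω| := by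
        apply mul_le_mul_of_nonneg_left _ (gG_nonneg x σ ω)
        rw [key]
        refine (Finset.abs_sum_le_sum_abs _ _).trans ?_
        apply Finset.sum_le_sum
        intro τ _
        rw [abs_mul, abs_of_nonneg (gG_nonneg x τ ω)]
    _ = ∑ τ, gG Hf C x σ ω * gG Hf C x τ ω * |Hf σ ω - Hf τ ω| := by
        rw [Finset.mul_sum]; exact Finset.sum_congr rfl fun τ _ => by ring

/-- second moment expansion -/
lemma sum_sq_eq_two_gV (x : ℝ) (ω : Ω) :
    ∑ σ, ∑ τ, gG Hf C x σ ω * gG Hf C x τ ω * (Hf σ ω - Hf τ ω) ^ 2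
      = 2 * gV Hf C x ω := by
  have inner : ∀ σ : S, ∑ τ, gG Hf C x σ ω * gG Hf C x τ ω * (Hf σ ω - Hf τ ω) ^ 2
      = gG Hf C x σ ω * ((Hf σ ω - gm Hf C x ω) ^ 2 * 1 + gV Hf C x ω
          - 2 * (Hf σ ω - gm Hf C x ω) * 0) := by
    intro σ
    calc ∑ τ, gG Hf C x σ ω * gG Hf C x τ ω * (Hf σ ω - Hf τ ω) ^ 2
        = ∑ τ, gG Hf C x σ ω * ((Hf σ ω - gm Hf C x ω) ^ 2 * gG Hf C x τ ω
            + gG Hf C x τ ω * (Hf τ ω - gm Hf C x ω) ^ 2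
            - 2 * (Hf σ ω - gm Hf C x ω) * (gG Hf C x τ ω * (Hf τ ω - gm Hf C x ω))) :=
          Finset.sum_congr rfl fun τ _ => by ring
      _ = gG Hf C x σ ω * ∑ τ, ((Hf σ ω - gm Hf C x ω) ^ 2 * gG Hf C x τ ω
            + gG Hf C x τ ω * (Hf τ ω - gm Hf C x ω) ^ 2
            - 2 * (Hf σ ω - gm Hf C x ω) * (gG Hf C x τ ω * (Hf τ ω - gm Hf C x ω))) := by
          rw [Finset.mul_sum]
      _ = gG Hf C x σ ω * ((Hf σ ω - gm Hf C x ω) ^ 2 * 1 + gV Hf C x ω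
            - 2 * (Hf σ ω - gm Hf C x ω) * 0) := by
          rw [Finset.sum_sub_distrib, Finset.sum_add_distrib, ← Finset.mul_sum,
            ← Finset.mul_sum, gG_sum, gG_centered, ← gV]
  rw [Finset.sum_congr rfl fun σ _ => inner σ]
  have e2 : ∀ σ : S, gG Hf C x σ ω * ((Hf σ ω - gm Hf C x ω) ^ 2 * 1 + gV Hf C x ω
      - 2 * (Hf σ ω - gm Hf C x ω) * 0)
      = gG Hf C x σ ω * (Hf σ ω - gm Hf C x ω) ^ 2 + gG Hf C x σ ω * gV Hf C x ω := by
    intro σ; ring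
  rw [Finset.sum_congr rfl fun σ _ => e2 σ, Finset.sum_add_distrib, ← Finset.sum_mul,
    gG_sum, ← gV]
  ring

lemma gV_nonneg (x : ℝ) (ω : Ω) : 0 ≤ gV Hf C x ω :=
  Finset.sum_nonneg fun σ _ => mul_nonneg (gG_nonneg x σ ω) (sq_nonneg _)

lemma gD_nonneg (x : ℝ) (ω : Ω) : 0 ≤ gD Hf C x ω :=
  Finset.sum_nonneg fun σ _ => Finset.sum_nonneg fun τ _ =>
    mul_nonneg (mul_nonneg (gG_nonneg x σ ω) (gG_nonneg x τ ω)) (abs_nonneg _)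

lemma gA_nonneg (x : ℝ) (ω : Ω) : 0 ≤ gA Hf C x ω :=
  Finset.sum_nonneg fun σ _ => mul_nonneg (gG_nonneg x σ ω) (abs_nonneg _)

/-- ∑∑ GσGτ = 1 -/
lemma gG_sum_sum (x : ℝ) (ω : Ω) :
    ∑ σ, ∑ τ, gG Hf C x σ ω * gG Hf C x τ ω = 1 := by
  have : ∀ σ : S, ∑ τ, gG Hf C x σ ω * gG Hf C x τ ω = gG Hf C x σ ω := by
    intro σ; rw [← Finset.mul_sum, gG_sum, mul_one]
  rw [Finset.sum_congr rfl fun σ _ => this σ, gG_sum]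

/-- gD ≤ ε/2 + gV/ε -/
lemma gD_le (x : ℝ) (ω : Ω) {ε : ℝ} (hε : 0 < ε) :
    gD Hf C x ω ≤ ε / 2 + gV Hf C x ω / ε := by
  have key : gD Hf C x ω ≤ ∑ σ, ∑ τ, gG Hf C x σ ω * gG Hf C x τ ω *
      (ε / 2 + (Hf σ ω - Hf τ ω) ^ 2 / (2 * ε)) := by
    apply Finset.sum_le_sum; intro σ _
    apply Finset.sum_le_sum; intro τ _
    apply mul_le_mul_of_nonneg_left _ (mul_nonneg (gG_nonneg x σ ω) (gG_nonneg x τ ω))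
    set t := Hf σ ω - Hf τ ω
    rw [show ε / 2 + t ^ 2 / (2 * ε) = (ε ^ 2 + t ^ 2) / (2 * ε) by field_simp,
      le_div_iff₀ (by positivity)]
    nlinarith [sq_nonneg (|t| - ε), sq_abs t, abs_nonneg t]
  refine key.trans ?_
  have split : ∑ σ, ∑ τ, gG Hf C x σ ω * gG Hf C x τ ω *
      (ε / 2 + (Hf σ ω - Hf τ ω) ^ 2 / (2 * ε))
      = (∑ σ, ∑ τ, gG Hf C x σ ω * gG Hf C x τ ω) * (ε / 2)
        + (∑ σ, ∑ τ, gG Hf C x σ ω * gG Hf C x τ ω * (Hf σ ω - Hf τ ω) ^ 2) / (2 * ε) := by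
    rw [Finset.sum_mul, Finset.sum_div, ← Finset.sum_add_distrib]
    apply Finset.sum_congr rfl; intro σ _
    rw [Finset.sum_mul, Finset.sum_div, ← Finset.sum_add_distrib]
    apply Finset.sum_congr rfl; intro τ _
    field_simp
  rw [split, gG_sum_sum, sum_sq_eq_two_gV, one_mul]
  have : 2 * gV Hf C x ω / (2 * ε) = gV Hf C x ω / ε := by
    field_simp
  rw [this]

/-- |gE2| ≤ 4 gV -/
lemma abs_gE2_le (x : ℝ) (ω : Ω) : |gE2 Hf C x ω| ≤ 4 * gV Hf C x ω := by
  have step1 : |gE2 Hf C x ω| ≤ ∑ σ, ∑ τ, gG Hf C x σ ω * gG Hf C x τ ω *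
      (2 * (Hf σ ω - gm Hf C x ω) ^ 2 + 2 * (Hf τ ω - gm Hf C x ω) ^ 2) := by
    refine (Finset.abs_sum_le_sum_abs _ _).trans ?_
    apply Finset.sum_le_sum; intro σ _
    refine (Finset.abs_sum_le_sum_abs _ _).trans ?_
    apply Finset.sum_le_sum; intro τ _
    rw [abs_mul, abs_of_nonneg (mul_nonneg (gG_nonneg x σ ω) (gG_nonneg x τ ω))]
    apply mul_le_mul_of_nonneg_left _ (mul_nonneg (gG_nonneg x σ ω) (gG_nonneg x τ ω))
    set a := Hf σ ω - gm Hf C x ω with ha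
    set b := Hf τ ω - gm Hf C x ω with hb
    have h1 : Hf σ ω + Hf τ ω - 2 * gm Hf C x ω = a + b := by rw [ha, hb]; ring
    have h2 : Hf σ ω - Hf τ ω = a - b := by rw [ha, hb]; ring
    rw [h1, h2, abs_mul, abs_abs, ← abs_mul,
      show (a + b) * (a - b) = a ^ 2 - b ^ 2 by ring]
    exact abs_le.2 ⟨by nlinarith [sq_nonneg a, sq_nonneg b], by nlinarith [sq_nonneg a, sq_nonneg b]⟩
  refine step1.trans ?_
  have inner : ∀ σ : S, ∑ τ, gG Hf C x σ ω * gG Hf C x τ ω *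
      (2 * (Hf σ ω - gm Hf C x ω) ^ 2 + 2 * (Hf τ ω - gm Hf C x ω) ^ 2)
      = gG Hf C x σ ω * (2 * (Hf σ ω - gm Hf C x ω) ^ 2 * 1 + 2 * gV Hf C x ω) := by
    intro σ
    calc ∑ τ, gG Hf C x σ ω * gG Hf C x τ ω *
        (2 * (Hf σ ω - gm Hf C x ω) ^ 2 + 2 * (Hf τ ω - gm Hf C x ω) ^ 2)
        = ∑ τ, gG Hf C x σ ω * (2 * (Hf σ ω - gm Hf C x ω) ^ 2 * gG Hf C x τ ω
            + 2 * (gG Hf C x τ ω * (Hf τ ω - gm Hf C x ω) ^ 2)) :=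
          Finset.sum_congr rfl fun τ _ => by ring
      _ = gG Hf C x σ ω * ∑ τ, (2 * (Hf σ ω - gm Hf C x ω) ^ 2 * gG Hf C x τ ω
            + 2 * (gG Hf C x τ ω * (Hf τ ω - gm Hf C x ω) ^ 2)) := by rw [Finset.mul_sum]
      _ = gG Hf C x σ ω * (2 * (Hf σ ω - gm Hf C x ω) ^ 2 * 1 + 2 * gV Hf C x ω) := by
          rw [Finset.sum_add_distrib, ← Finset.mul_sum, ← Finset.mul_sum, gG_sum, ← gV]
  rw [Finset.sum_congr rfl fun σ _ => inner σ]
  have e2 : ∀ σ : S, gG Hf C x σ ω * (2 * (Hf σ ω - gm Hf C x ω) ^ 2 * 1 + 2 * gV Hf C x ω)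
      = 2 * (gG Hf C x σ ω * (Hf σ ω - gm Hf C x ω) ^ 2) + gG Hf C x σ ω * (2 * gV Hf C x ω) := by
    intro σ; ring
  rw [Finset.sum_congr rfl fun σ _ => e2 σ, Finset.sum_add_distrib, ← Finset.mul_sum,
    ← Finset.sum_mul, gG_sum, ← gV]
  ring_nf
  exact le_rfl


/-! ### Derivatives in the coupling parameter -/

lemma hasDerivAt_gw (x : ℝ) (σ : S) (ω : Ω) :
    HasDerivAt (fun y => gw Hf C y σ ω) (Hf σ ω * gw Hf C x σ ω) x := by
  have h1 : HasDerivAt (fun y : ℝ => y * Hf σ ω + C σ ω) (Hf σ ω) x := by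
    simpa using ((hasDerivAt_id x).mul_const (Hf σ ω)).add_const (C σ ω)
  have := h1.exp
  simpa [gw, mul_comm] using this

lemma hasDerivAt_gZ (x : ℝ) (ω : Ω) :
    HasDerivAt (fun y => gZ Hf C y ω) (∑ τ, Hf τ ω * gw Hf C x τ ω) x := by
  have : HasDerivAt (fun y => ∑ τ, gw Hf C y τ ω) (∑ τ, Hf τ ω * gw Hf C x τ ω) x :=
    HasDerivAt.fun_sum fun τ _ => hasDerivAt_gw x τ ω
  simpa [gZ] using this

lemma gm_mul_gZ (x : ℝ) (ω : Ω) :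
    gm Hf C x ω * gZ Hf C x ω = ∑ τ, Hf τ ω * gw Hf C x τ ω := by
  rw [gm, Finset.sum_mul]
  refine Finset.sum_congr rfl fun τ _ => ?_
  rw [gG]
  field_simp [gZ_ne x ω]

lemma hasDerivAt_gG (x : ℝ) (σ : S) (ω : Ω) :
    HasDerivAt (fun y => gG Hf C y σ ω)
      (gG Hf C x σ ω * (Hf σ ω - gm Hf C x ω)) x := by
  have := (hasDerivAt_gw (Hf:=Hf) (C:=C) x σ ω).fun_div (hasDerivAt_gZ (Hf:=Hf) (C:=C) x ω) (gZ_ne x ω)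
  have heq : (Hf σ ω * gw Hf C x σ ω * gZ Hf C x ω
      - gw Hf C x σ ω * ∑ τ, Hf τ ω * gw Hf C x τ ω) / gZ Hf C x ω ^ 2
      = gG Hf C x σ ω * (Hf σ ω - gm Hf C x ω) := by
    rw [← gm_mul_gZ, gG]
    field_simp [gZ_ne x ω]
  rw [heq] at this
  simpa [gG] using this

lemma hasDerivAt_gD (x : ℝ) (ω : Ω) :
    HasDerivAt (fun y => gD Hf C y ω) (gE2 Hf C x ω) x := by
  have key : ∀ σ τ : S, HasDerivAt
      (fun y => gG Hf C y σ ω * gG Hf C y τ ω * |Hf σ ω - Hf τ ω|)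
      (gG Hf C x σ ω * gG Hf C x τ ω *
        ((Hf σ ω + Hf τ ω - 2 * gm Hf C x ω) * |Hf σ ω - Hf τ ω|)) x := by
    intro σ τ
    have h := ((hasDerivAt_gG (Hf:=Hf) (C:=C) x σ ω).fun_mul (hasDerivAt_gG (Hf:=Hf) (C:=C) x τ ω)).mul_const |Hf σ ω - Hf τ ω|
    convert h using 1
    · rfl
    · rfl
    · ring
  have : HasDerivAt (fun y => ∑ σ, ∑ τ : S,
      gG Hf C y σ ω * gG Hf C y τ ω * |Hf σ ω - Hf τ ω|) (gE2 Hf C x ω) x := by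
    rw [gE2]
    exact HasDerivAt.fun_sum fun σ _ => HasDerivAt.fun_sum fun τ _ => key σ τ
  simpa [gD] using this

/-! ### Continuity in the coupling parameter -/

lemma continuous_gw (σ : S) (ω : Ω) : Continuous fun x => gw Hf C x σ ω := by
  have : Continuous fun x : ℝ => x * Hf σ ω + C σ ω :=
    (continuous_id.mul continuous_const).add continuous_const
  exact Real.continuous_exp.comp this

lemma continuous_gZ (ω : Ω) : Continuous fun x => gZ Hf C x ω :=
  continuous_finset_sum _ fun σ _ => continuous_gw σ ω

lemma continuous_gG (σ : S) (ω : Ω) : Continuous fun x => gG Hf C x σ ω :=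
  (continuous_gw σ ω).div (continuous_gZ ω) fun x => gZ_ne x ω

lemma continuous_gm (ω : Ω) : Continuous fun x => gm Hf C x ω :=
  continuous_finset_sum _ fun σ _ => (continuous_gG σ ω).mul continuous_const

lemma continuous_gV (ω : Ω) : Continuous fun x => gV Hf C x ω :=
  continuous_finset_sum _ fun σ _ => (continuous_gG σ ω).mul
    ((continuous_const.sub (continuous_gm ω)).pow 2)

lemma continuous_gE2 (ω : Ω) : Continuous fun x => gE2 Hf C x ω :=
  continuous_finset_sum _ fun σ _ => continuous_finset_sum _ fun τ _ =>
    (((continuous_gG σ ω).mul (continuous_gG τ ω)).mul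
      (((continuous_const.sub (continuous_const.mul (continuous_gm ω)))).mul continuous_const))

/-! ### Measurability in ω -/

section Meas

variable (hHm : ∀ σ, Measurable (Hf σ)) (hCm : ∀ σ, Measurable (C σ))

include hHm hCm

lemma meas_gw (x : ℝ) (σ : S) : Measurable (gw Hf C x σ) :=
  ((measurable_const.mul (hHm σ)).add (hCm σ)).exp

lemma meas_gZ (x : ℝ) : Measurable (gZ Hf C x) :=
  Finset.measurable_sum _ fun σ _ => meas_gw hHm hCm x σ

lemma meas_gG (x : ℝ) (σ : S) : Measurable (gG Hf C x σ) :=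
  (meas_gw hHm hCm x σ).div (meas_gZ hHm hCm x)

lemma meas_gm (x : ℝ) : Measurable (gm Hf C x) :=
  Finset.measurable_sum _ fun σ _ => (meas_gG hHm hCm x σ).mul (hHm σ)

lemma meas_gV (x : ℝ) : Measurable (gV Hf C x) :=
  Finset.measurable_sum _ fun σ _ => (meas_gG hHm hCm x σ).mul
    (((hHm σ).sub (meas_gm hHm hCm x)).pow measurable_const)

lemma meas_gA (x : ℝ) : Measurable (gA Hf C x) :=
  Finset.measurable_sum _ fun σ _ => (meas_gG hHm hCm x σ).mul
    ((hHm σ).sub (meas_gm hHm hCm x)).abs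

lemma meas_gD (x : ℝ) : Measurable (gD Hf C x) :=
  Finset.measurable_sum _ fun σ _ => Finset.measurable_sum _ fun τ _ =>
    ((meas_gG hHm hCm x σ).mul (meas_gG hHm hCm x τ)).mul ((hHm σ).sub (hHm τ)).abs

lemma meas_gE2 (x : ℝ) : Measurable (gE2 Hf C x) :=
  Finset.measurable_sum _ fun σ _ => Finset.measurable_sum _ fun τ _ =>
    ((meas_gG hHm hCm x σ).mul (meas_gG hHm hCm x τ)).mul
      ((((hHm σ).add (hHm τ)).sub (measurable_const.mul (meas_gm hHm hCm x))).mul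
        ((hHm σ).sub (hHm τ)).abs)

end Meas

/-! ### Bounds in terms of a dominating function T -/

section Bounds

variable {T : Ω → ℝ} (hT : ∀ σ ω, |Hf σ ω| ≤ T ω)

include hT

lemma T_nonneg (ω : Ω) : 0 ≤ T ω :=
  (abs_nonneg _).trans (hT (Classical.arbitrary S) ω)

lemma abs_gm_le (x : ℝ) (ω : Ω) : |gm Hf C x ω| ≤ T ω := by
  calc |gm Hf C x ω| ≤ ∑ σ, |gG Hf C x σ ω * Hf σ ω| := Finset.abs_sum_le_sum_abs _ _
    _ ≤ ∑ σ, gG Hf C x σ ω * T ω := by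
        apply Finset.sum_le_sum; intro σ _
        rw [abs_mul, abs_of_nonneg (gG_nonneg x σ ω)]
        exact mul_le_mul_of_nonneg_left (hT σ ω) (gG_nonneg x σ ω)
    _ = T ω := by rw [← Finset.sum_mul, gG_sum, one_mul]

lemma gV_le_T (x : ℝ) (ω : Ω) : gV Hf C x ω ≤ 4 * T ω ^ 2 := by
  calc gV Hf C x ω ≤ ∑ σ, gG Hf C x σ ω * (4 * T ω ^ 2) := by
        apply Finset.sum_le_sum; intro σ _
        apply mul_le_mul_of_nonneg_left _ (gG_nonneg x σ ω)
        have h1 : |Hf σ ω - gm Hf C x ω| ≤ 2 * T ω := by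
          calc |Hf σ ω - gm Hf C x ω| ≤ |Hf σ ω| + |gm Hf C x ω| := abs_sub _ _
            _ ≤ T ω + T ω := add_le_add (hT σ ω) (abs_gm_le hT x ω)
            _ = 2 * T ω := by ring
        have h2 := sq_le_sq' (neg_le_of_abs_le h1) (le_of_abs_le h1)
        calc (Hf σ ω - gm Hf C x ω) ^ 2 ≤ (2 * T ω) ^ 2 := h2
          _ = 4 * T ω ^ 2 := by ring
    _ = 4 * T ω ^ 2 := by rw [← Finset.sum_mul, gG_sum, one_mul]

lemma gD_le_T (x : ℝ) (ω : Ω) : gD Hf C x ω ≤ 2 * T ω := by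
  calc gD Hf C x ω ≤ ∑ σ, ∑ τ, gG Hf C x σ ω * gG Hf C x τ ω * (2 * T ω) := by
        apply Finset.sum_le_sum; intro σ _
        apply Finset.sum_le_sum; intro τ _
        apply mul_le_mul_of_nonneg_left _ (mul_nonneg (gG_nonneg x σ ω) (gG_nonneg x τ ω))
        calc |Hf σ ω - Hf τ ω| ≤ |Hf σ ω| + |Hf τ ω| := abs_sub _ _
          _ ≤ T ω + T ω := add_le_add (hT σ ω) (hT τ ω)
          _ = 2 * T ω := by ring
    _ = 2 * T ω := by
        rw [show (∑ σ, ∑ τ, gG Hf C x σ ω * gG Hf C x τ ω * (2 * T ω))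
            = (∑ σ, ∑ τ, gG Hf C x σ ω * gG Hf C x τ ω) * (2 * T ω) by
              rw [Finset.sum_mul]; exact Finset.sum_congr rfl fun σ _ => by rw [Finset.sum_mul],
            gG_sum_sum, one_mul]

lemma gA_le_T (x : ℝ) (ω : Ω) : gA Hf C x ω ≤ 2 * T ω := by
  calc gA Hf C x ω ≤ ∑ σ, gG Hf C x σ ω * (2 * T ω) := by
        apply Finset.sum_le_sum; intro σ _
        apply mul_le_mul_of_nonneg_left _ (gG_nonneg x σ ω)
        calc |Hf σ ω - gm Hf C x ω| ≤ |Hf σ ω| + |gm Hf C x ω| := abs_sub _ _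
          _ ≤ T ω + T ω := add_le_add (hT σ ω) (abs_gm_le hT x ω)
          _ = 2 * T ω := by ring
    _ = 2 * T ω := by rw [← Finset.sum_mul, gG_sum, one_mul]

end Bounds

/-! ### Integral (expectation) level -/

noncomputable def Abar (Hf C : S → Ω → ℝ) (μ : Measure Ω) (x : ℝ) : ℝ := ∫ ω, gA Hf C x ω ∂μ
noncomputable def Dbar (Hf C : S → Ω → ℝ) (μ : Measure Ω) (x : ℝ) : ℝ := ∫ ω, gD Hf C x ω ∂μ
noncomputable def Vbar (Hf C : S → Ω → ℝ) (μ : Measure Ω) (x : ℝ) : ℝ := ∫ ω, gV Hf C x ω ∂μ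
noncomputable def Ebar (Hf C : S → Ω → ℝ) (μ : Measure Ω) (x : ℝ) : ℝ := ∫ ω, gE2 Hf C x ω ∂μ

section Integral

variable (μ : Measure Ω) [IsProbabilityMeasure μ] {T : Ω → ℝ}
variable (hHm : ∀ σ, Measurable (Hf σ)) (hCm : ∀ σ, Measurable (C σ))
variable (hT : ∀ σ ω, |Hf σ ω| ≤ T ω)
variable (hTint : Integrable T μ) (hT2int : Integrable (fun ω => T ω ^ 2) μ)

include hHm hCm hT hTint hT2int

lemma int_gA (x : ℝ) : Integrable (gA Hf C x) μ := by
  refine Integrable.mono' (hTint.const_mul 2) (meas_gA hHm hCm x).aestronglyMeasurable ?_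
  filter_upwards with ω
  rw [Real.norm_eq_abs, abs_of_nonneg (gA_nonneg x ω)]
  exact gA_le_T hT x ω

lemma int_gD (x : ℝ) : Integrable (gD Hf C x) μ := by
  refine Integrable.mono' (hTint.const_mul 2) (meas_gD hHm hCm x).aestronglyMeasurable ?_
  filter_upwards with ω
  rw [Real.norm_eq_abs, abs_of_nonneg (gD_nonneg x ω)]
  exact gD_le_T hT x ω

lemma int_gV (x : ℝ) : Integrable (gV Hf C x) μ := by
  refine Integrable.mono' (hT2int.const_mul 4) (meas_gV hHm hCm x).aestronglyMeasurable ?_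
  filter_upwards with ω
  rw [Real.norm_eq_abs, abs_of_nonneg (gV_nonneg x ω)]
  exact gV_le_T hT x ω

lemma int_gE2 (x : ℝ) : Integrable (gE2 Hf C x) μ := by
  refine Integrable.mono' (hT2int.const_mul 16) (meas_gE2 hHm hCm x).aestronglyMeasurable ?_
  filter_upwards with ω
  rw [Real.norm_eq_abs]
  refine (abs_gE2_le x ω).trans ?_
  have := gV_le_T (Hf:=Hf) (C:=C) hT x ω
  linarith

lemma Abar_le_Dbar (x : ℝ) : Abar Hf C μ x ≤ Dbar Hf C μ x :=
  integral_mono (int_gA μ hHm hCm hT hTint hT2int x) (int_gD μ hHm hCm hT hTint hT2int x)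
    fun ω => gA_le_gD x ω

lemma Vbar_nonneg (x : ℝ) : 0 ≤ Vbar Hf C μ x :=
  integral_nonneg fun ω => gV_nonneg x ω

lemma Dbar_le (x : ℝ) {ε : ℝ} (hε : 0 < ε) :
    Dbar Hf C μ x ≤ ε / 2 + Vbar Hf C μ x / ε := by
  have step : Dbar Hf C μ x ≤ ∫ ω, (ε / 2 + gV Hf C x ω / ε) ∂μ := by
    refine integral_mono (int_gD μ hHm hCm hT hTint hT2int x) ?_ fun ω => gD_le x ω hε
    exact (integrable_const _).add ((int_gV μ hHm hCm hT hTint hT2int x).div_const ε)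
  refine step.trans_eq ?_
  rw [integral_add (integrable_const _) ((int_gV μ hHm hCm hT hTint hT2int x).div_const ε),
    integral_const, integral_div]
  simp [Vbar]

lemma continuous_Vbar : Continuous (Vbar Hf C μ) := by
  refine continuous_of_dominated (fun x => (meas_gV hHm hCm x).aestronglyMeasurable)
    (fun x => Eventually.of_forall fun ω => ?_) (hT2int.const_mul 4)
    (Eventually.of_forall fun ω => continuous_gV ω)
  rw [Real.norm_eq_abs, abs_of_nonneg (gV_nonneg x ω)]
  exact gV_le_T hT x ω

lemma continuous_Ebar : Continuous (Ebar Hf C μ) := by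
  refine continuous_of_dominated (fun x => (meas_gE2 hHm hCm x).aestronglyMeasurable)
    (fun x => Eventually.of_forall fun ω => ?_) (hT2int.const_mul 16)
    (Eventually.of_forall fun ω => continuous_gE2 ω)
  rw [Real.norm_eq_abs]
  refine (abs_gE2_le x ω).trans ?_
  have := gV_le_T (Hf:=Hf) (C:=C) hT x ω
  linarith

lemma abs_Ebar_le (x : ℝ) : |Ebar Hf C μ x| ≤ 4 * Vbar Hf C μ x := by
  calc |Ebar Hf C μ x| ≤ ∫ ω, |gE2 Hf C x ω| ∂μ := by
        simpa [Real.norm_eq_abs, Ebar] using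
          norm_integral_le_integral_norm (μ := μ) (f := gE2 Hf C x)
    _ ≤ ∫ ω, 4 * gV Hf C x ω ∂μ :=
        integral_mono (int_gE2 μ hHm hCm hT hTint hT2int x).abs
          ((int_gV μ hHm hCm hT hTint hT2int x).const_mul 4) fun ω => abs_gE2_le x ω
    _ = 4 * Vbar Hf C μ x := by rw [integral_const_mul]; rfl

lemma hasDerivAt_Dbar (x : ℝ) :
    HasDerivAt (Dbar Hf C μ) (Ebar Hf C μ x) x := by
  have := hasDerivAt_integral_of_dominated_loc_of_deriv_le (μ := μ)
    (F := fun y ω => gD Hf C y ω) (F' := fun y ω => gE2 Hf C y ω)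
    (x₀ := x) (bound := fun ω => 16 * T ω ^ 2) (s := Set.univ) Filter.univ_mem
    (Eventually.of_forall fun y => (meas_gD hHm hCm y).aestronglyMeasurable)
    (int_gD μ hHm hCm hT hTint hT2int x)
    (meas_gE2 hHm hCm x).aestronglyMeasurable
    (Eventually.of_forall fun ω y _ => by
      show ‖gE2 Hf C y ω‖ ≤ 16 * T ω ^ 2
      rw [Real.norm_eq_abs]
      refine (abs_gE2_le y ω).trans ?_
      have := gV_le_T (Hf:=Hf) (C:=C) hT y ω
      linarith)
    (hT2int.const_mul 16)
    (Eventually.of_forall fun ω y _ => hasDerivAt_gD y ω)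
  exact this.2

/-- The abstract core of Statement 5. -/
theorem abstract_main (a b : ℝ) (hab : a < b) (K : ℝ) (hK : 0 < K) (Δ : ℝ)
    (hΔ : Δ = K⁻¹ * ∫ x in a..b, Vbar Hf C μ x) :
    K⁻¹ * Abar Hf C μ a ≤ K⁻¹ * Dbar Hf C μ a ∧
    K⁻¹ * Dbar Hf C μ a ≤ 2 * Real.sqrt (Δ / (K * (b - a))) + 8 * Δ := by
  have hVc : Continuous (Vbar Hf C μ) := continuous_Vbar μ hHm hCm hT hTint hT2int
  have hEc : Continuous (Ebar Hf C μ) := continuous_Ebar μ hHm hCm hT hTint hT2int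
  have hVnn : ∀ x, 0 ≤ Vbar Hf C μ x := Vbar_nonneg μ hHm hCm hT hTint hT2int
  have hKΔ : ∫ x in a..b, Vbar Hf C μ x = K * Δ := by
    rw [hΔ]; field_simp
  have hΔnn : 0 ≤ Δ := by
    rw [hΔ]
    exact mul_nonneg (inv_nonneg.2 hK.le)
      (intervalIntegral.integral_nonneg hab.le fun x _ => hVnn x)
  obtain ⟨x₀, hx₀mem, hx₀min⟩ :=
    isCompact_Icc.exists_isMinOn (Set.nonempty_Icc.2 hab.le) hVc.continuousOn
  have hmin : (b - a) * Vbar Hf C μ x₀ ≤ K * Δ := by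
    rw [← hKΔ]
    have h1 : ∫ _x in a..b, Vbar Hf C μ x₀ ≤ ∫ x in a..b, Vbar Hf C μ x :=
      intervalIntegral.integral_mono_on hab.le intervalIntegrable_const
        (hVc.intervalIntegrable a b) fun x hx => hx₀min hx
    simpa [intervalIntegral.integral_const, smul_eq_mul] using h1
  have hFTC : Dbar Hf C μ a ≤ Dbar Hf C μ x₀ + 4 * (K * Δ) := by
    have heq : ∫ y in a..x₀, Ebar Hf C μ y = Dbar Hf C μ x₀ - Dbar Hf C μ a :=
      intervalIntegral.integral_eq_sub_of_hasDerivAt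
        (fun y _ => hasDerivAt_Dbar μ hHm hCm hT hTint hT2int y)
        (hEc.intervalIntegrable a x₀)
    have habs : |∫ y in a..x₀, Ebar Hf C μ y| ≤ ∫ y in a..x₀, 4 * Vbar Hf C μ y := by
      refine (intervalIntegral.abs_integral_le_integral_abs hx₀mem.1).trans ?_
      exact intervalIntegral.integral_mono_on hx₀mem.1
        (hEc.abs.intervalIntegrable a x₀)
        ((continuous_const.mul hVc).intervalIntegrable a x₀)
        fun y _ => abs_Ebar_le μ hHm hCm hT hTint hT2int y
    have hsub : ∫ y in a..x₀, 4 * Vbar Hf C μ y ≤ ∫ y in a..b, 4 * Vbar Hf C μ y :=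
      intervalIntegral.integral_mono_interval le_rfl hx₀mem.1 hx₀mem.2
        (Eventually.of_forall fun y => by
          simp only [Pi.zero_apply]
          have := hVnn y; linarith)
        ((continuous_const.mul hVc).intervalIntegrable a b)
    have hend : ∫ y in a..b, 4 * Vbar Hf C μ y = 4 * (K * Δ) := by
      rw [intervalIntegral.integral_const_mul, hKΔ]
    have h5 : -(∫ y in a..x₀, Ebar Hf C μ y) ≤ |∫ y in a..x₀, Ebar Hf C μ y| := neg_le_abs _
    linarith
  have key : ∀ ε : ℝ, 0 < ε →
      K⁻¹ * Dbar Hf C μ a ≤ ε / (2 * K) + Δ / ((b - a) * ε) + 4 * Δ := by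
    intro ε hε
    have hD0 := Dbar_le μ hHm hCm hT hTint hT2int x₀ hε
    have h1 : Dbar Hf C μ a ≤ (ε / 2 + Vbar Hf C μ x₀ / ε) + 4 * (K * Δ) := by linarith
    have h2 : K⁻¹ * Dbar Hf C μ a
        ≤ K⁻¹ * ((ε / 2 + Vbar Hf C μ x₀ / ε) + 4 * (K * Δ)) :=
      mul_le_mul_of_nonneg_left h1 (inv_nonneg.2 hK.le)
    have hV0 : Vbar Hf C μ x₀ ≤ K * Δ / (b - a) := by
      rw [le_div_iff₀ (by linarith : (0:ℝ) < b - a)]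
      linarith [hmin]
    have h3 : K⁻¹ * ((ε / 2 + Vbar Hf C μ x₀ / ε) + 4 * (K * Δ))
        ≤ K⁻¹ * ((ε / 2 + (K * Δ / (b - a)) / ε) + 4 * (K * Δ)) := by
      apply mul_le_mul_of_nonneg_left _ (inv_nonneg.2 hK.le)
      gcongr
    have h4 : K⁻¹ * ((ε / 2 + (K * Δ / (b - a)) / ε) + 4 * (K * Δ))
        = ε / (2 * K) + Δ / ((b - a) * ε) + 4 * Δ := by
      field_simp
    linarith
  constructor
  · exact mul_le_mul_of_nonneg_left
      (Abar_le_Dbar μ hHm hCm hT hTint hT2int a) (inv_nonneg.2 hK.le)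
  rcases eq_or_lt_of_le hΔnn with hΔ0 | hΔpos
  · -- Δ = 0
    have hle0 : K⁻¹ * Dbar Hf C μ a ≤ 0 := by
      refine le_of_forall_pos_le_add fun ε' hε' => ?_
      have := key (2 * K * ε') (by positivity)
      have he1 : 2 * K * ε' / (2 * K) = ε' := by field_simp
      rw [← hΔ0] at this
      simp only [zero_div, mul_zero, add_zero, he1] at this
      linarith
    have : Δ / (K * (b - a)) = 0 := by rw [← hΔ0]; simp
    rw [this, Real.sqrt_zero, ← hΔ0]
    simpa using hle0
  · -- Δ > 0
    set s := Real.sqrt (Δ / (K * (b - a))) with hs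
    have hba : (0:ℝ) < b - a := by linarith
    have hspos : 0 < s := Real.sqrt_pos.2 (div_pos hΔpos (mul_pos hK hba))
    have hs2 : s ^ 2 = Δ / (K * (b - a)) :=
      Real.sq_sqrt (le_of_lt (div_pos hΔpos (mul_pos hK hba)))
    have hΔeq : Δ = s ^ 2 * (K * (b - a)) := by
      rw [hs2]; field_simp
    have hkey := key (2 * K * s) (mul_pos (mul_pos two_pos hK) hspos)
    have he1 : 2 * K * s / (2 * K) = s := by field_simp
    have he2 : Δ / ((b - a) * (2 * K * s)) = s / 2 := by
      rw [hΔeq]; field_simp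
    rw [he1, he2] at hkey
    linarith

end Integral

end S5



/-! ### Bridge between the concrete model and the abstract framework -/

namespace S5B

variable {Ω : Type*} [MeasurableSpace Ω]
variable (N p : ℕ) (β : ℕ → ℝ) (hβ : (Function.support β).Finite) (h : ℝ)
variable (g : (q : ℕ) → (Fin q → Fin N) → Ω → ℝ)

/-- the `p`-spin Hamiltonian as abstract `Hf` -/
noncomputable def bH : Config N → Ω → ℝ := fun σ ω => Hp N p (g p) σ ω

/-- the remaining (constant in `x`) part of the exponent -/
noncomputable def bC : Config N → Ω → ℝ := fun σ ω =>
  (∑ q ∈ (hβ.toFinset ∪ {p}).erase p, β q * Hp N q (g q) σ ω) + h * ∑ i, spin (σ i)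

lemma weight_eq (x : ℝ) (σ : Config N) (ω : Ω) :
    weight N (Function.update β p x) h g σ ω
      = S5.gw (bH N p g) (bC N p β hβ h g) x σ ω := by
  unfold weight S5.gw bH bC
  congr 1
  have hsupp : Function.support (fun q => Function.update β p x q * Hp N q (g q) σ ω)
      ⊆ ((hβ.toFinset ∪ {p} : Finset ℕ) : Set ℕ) := by
    intro q hq
    simp only [Function.mem_support] at hq
    by_cases hqp : q = p
    · simp [hqp]
    · have hβq : β q ≠ 0 := by
        intro h0
        apply hq
        rw [Function.update_of_ne hqp, h0, zero_mul]
      simp [hβ.mem_toFinset, Function.mem_support, hβq]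
  rw [finsum_eq_sum_of_support_subset _ hsupp]
  have hp_mem : p ∈ hβ.toFinset ∪ {p} := Finset.mem_union_right _ (Finset.mem_singleton_self p)
  rw [← Finset.add_sum_erase _ _ hp_mem, Function.update_self]
  have : ∑ q ∈ (hβ.toFinset ∪ {p}).erase p, Function.update β p x q * Hp N q (g q) σ ω
      = ∑ q ∈ (hβ.toFinset ∪ {p}).erase p, β q * Hp N q (g q) σ ω :=
    Finset.sum_congr rfl fun q hq => by
      rw [Function.update_of_ne (Finset.ne_of_mem_erase hq)]
  rw [this]
  ring

lemma gibbs_eq (x : ℝ) (σ : Config N) (ω : Ω) :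
    gibbs N (Function.update β p x) h g σ ω
      = S5.gG (bH N p g) (bC N p β hβ h g) x σ ω := by
  unfold gibbs S5.gG S5.gZ Zpart
  rw [weight_eq N p β hβ h g x σ ω]
  congr 1
  exact Finset.sum_congr rfl fun τ _ => weight_eq N p β hβ h g x τ ω

end S5B

namespace S5B

variable {Ω : Type*} [MeasurableSpace Ω]
variable (N p : ℕ) (β : ℕ → ℝ) (hβ : (Function.support β).Finite) (h : ℝ)
variable (g : (q : ℕ) → (Fin q → Fin N) → Ω → ℝ)

/-- one-replica average of a function of a single configuration -/
lemma avg_one (x : ℝ) (F : Config N → Ω → ℝ) (ω : Ω) :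
    gibbsAvg N (Function.update β p x) h g 1 (fun σs ω' => F (σs 0) ω') ω
      = ∑ σ : Config N, S5.gG (bH N p g) (bC N p β hβ h g) x σ ω * F σ ω := by
  unfold gibbsAvg
  rw [← Equiv.sum_comp (Equiv.funUnique (Fin 1) (Config N)).symm]
  refine Finset.sum_congr rfl fun σ _ => ?_
  have hg1 : gibbs N (Function.update β p x) h g
      ((Equiv.funUnique (Fin 1) (Config N)).symm σ 0) ω
      = S5.gG (bH N p g) (bC N p β hβ h g) x σ ω := gibbs_eq N p β hβ h g x σ ω
  rw [Fin.prod_univ_one, hg1, mul_comm]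
  rfl

/-- two-replica average -/
lemma avg_two (x : ℝ) (F : Config N → Config N → Ω → ℝ) (ω : Ω) :
    gibbsAvg N (Function.update β p x) h g 2 (fun σs ω' => F (σs 0) (σs 1) ω') ω
      = ∑ σ : Config N, ∑ τ : Config N,
          S5.gG (bH N p g) (bC N p β hβ h g) x σ ω
            * S5.gG (bH N p g) (bC N p β hβ h g) x τ ω * F σ τ ω := by
  unfold gibbsAvg
  rw [← Equiv.sum_comp (piFinTwoEquiv fun _ => Config N).symm, Fintype.sum_prod_type]
  refine Finset.sum_congr rfl fun σ _ => Finset.sum_congr rfl fun τ _ => ?_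
  have hg1 : gibbs N (Function.update β p x) h g
      ((piFinTwoEquiv fun _ => Config N).symm (σ, τ) 0) ω
      = S5.gG (bH N p g) (bC N p β hβ h g) x σ ω := gibbs_eq N p β hβ h g x σ ω
  have hg2 : gibbs N (Function.update β p x) h g
      ((piFinTwoEquiv fun _ => Config N).symm (σ, τ) 1) ω
      = S5.gG (bH N p g) (bC N p β hβ h g) x τ ω := gibbs_eq N p β hβ h g x τ ω
  rw [Fin.prod_univ_two, hg1, hg2]
  show (fun σs ω' => F (σs 0) (σs 1) ω') ((piFinTwoEquiv fun _ => Config N).symm (σ, τ)) ω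
      * (S5.gG (bH N p g) (bC N p β hβ h g) x σ ω * S5.gG (bH N p g) (bC N p β hβ h g) x τ ω)
    = S5.gG (bH N p g) (bC N p β hβ h g) x σ ω * S5.gG (bH N p g) (bC N p β hβ h g) x τ ω
      * F σ τ ω
  have hb : (fun σs ω' => F (σs 0) (σs 1) ω') ((piFinTwoEquiv fun _ => Config N).symm (σ, τ)) ω
      = F σ τ ω := rfl
  rw [hb]
  ring

lemma inner_avg (x : ℝ) (ω : Ω) :
    gibbsAvg N (Function.update β p x) h g 1
        (fun τs ω'' => Hp N p (g p) (τs 0) ω'') ω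
      = S5.gm (bH N p g) (bC N p β hβ h g) x ω :=
  avg_one N p β hβ h g x (fun σ ω' => Hp N p (g p) σ ω') ω

lemma avg_sq (x : ℝ) (ω : Ω) :
    gibbsAvg N (Function.update β p x) h g 1
        (fun σs ω' => (Hp N p (g p) (σs 0) ω' -
          gibbsAvg N (Function.update β p x) h g 1
            (fun τs ω'' => Hp N p (g p) (τs 0) ω'') ω') ^ 2) ω
      = S5.gV (bH N p g) (bC N p β hβ h g) x ω := by
  have := avg_one N p β hβ h g x
    (fun σ ω' => (Hp N p (g p) σ ω' -
      gibbsAvg N (Function.update β p x) h g 1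
        (fun τs ω'' => Hp N p (g p) (τs 0) ω'') ω') ^ 2) ω
  rw [this]
  refine Finset.sum_congr rfl fun σ _ => ?_
  rw [inner_avg N p β hβ h g x ω]
  rfl

lemma avg_abs (x : ℝ) (ω : Ω) :
    gibbsAvg N (Function.update β p x) h g 1
        (fun σs ω' => |Hp N p (g p) (σs 0) ω' -
          gibbsAvg N (Function.update β p x) h g 1
            (fun τs ω'' => Hp N p (g p) (τs 0) ω'') ω'|) ω
      = S5.gA (bH N p g) (bC N p β hβ h g) x ω := by
  have := avg_one N p β hβ h g x
    (fun σ ω' => |Hp N p (g p) σ ω' -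
      gibbsAvg N (Function.update β p x) h g 1
        (fun τs ω'' => Hp N p (g p) (τs 0) ω'') ω'|) ω
  rw [this]
  refine Finset.sum_congr rfl fun σ _ => ?_
  rw [inner_avg N p β hβ h g x ω]
  rfl

lemma avg_absdiff (x : ℝ) (ω : Ω) :
    gibbsAvg N (Function.update β p x) h g 2
        (fun σs ω' => |Hp N p (g p) (σs 0) ω' - Hp N p (g p) (σs 1) ω'|) ω
      = S5.gD (bH N p g) (bC N p β hβ h g) x ω := by
  have := avg_two N p β hβ h g x
    (fun σ τ ω' => |Hp N p (g p) σ ω' - Hp N p (g p) τ ω'|) ω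
  rw [this]
  rfl

end S5B

/-! ### Gaussian integrability -/

namespace S5G

open Real

lemma exp_quarter_bound_sq :
    ∀ x : ℝ, x ^ 2 * Real.exp (-x ^ 2 / 2) ≤ 5 * Real.exp (-(1/4) * x ^ 2) := by
  intro x
  have h1 : x ^ 2 / 4 + 1 ≤ Real.exp (x ^ 2 / 4) := Real.add_one_le_exp _
  have h2 : x ^ 2 ≤ 5 * Real.exp (x ^ 2 / 4) := by nlinarith [Real.exp_pos (x ^ 2 / 4)]
  calc x ^ 2 * Real.exp (-x ^ 2 / 2)
      ≤ (5 * Real.exp (x ^ 2 / 4)) * Real.exp (-x ^ 2 / 2) :=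
        mul_le_mul_of_nonneg_right h2 (Real.exp_pos _).le
    _ = 5 * Real.exp (-(1/4) * x ^ 2) := by
        rw [mul_assoc, ← Real.exp_add]; ring_nf

lemma exp_quarter_bound_abs :
    ∀ x : ℝ, |x| * Real.exp (-x ^ 2 / 2) ≤ 5 * Real.exp (-(1/4) * x ^ 2) := by
  intro x
  have h1 : x ^ 2 / 4 + 1 ≤ Real.exp (x ^ 2 / 4) := Real.add_one_le_exp _
  have h0 : (1:ℝ) ≤ Real.exp (x ^ 2 / 4) := by nlinarith [sq_nonneg x]
  have h2 : |x| ≤ 5 * Real.exp (x ^ 2 / 4) := by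
    nlinarith [sq_abs x, abs_nonneg x, sq_nonneg (|x| - 1)]
  calc |x| * Real.exp (-x ^ 2 / 2)
      ≤ (5 * Real.exp (x ^ 2 / 4)) * Real.exp (-x ^ 2 / 2) :=
        mul_le_mul_of_nonneg_right h2 (Real.exp_pos _).le
    _ = 5 * Real.exp (-(1/4) * x ^ 2) := by
        rw [mul_assoc, ← Real.exp_add]; ring_nf

lemma integrable_gaussian (q : ℝ → ℝ) (hqm : Measurable q)
    (hbd : ∀ x, |q x| * Real.exp (-x ^ 2 / 2) ≤ 5 * Real.exp (-(1/4) * x ^ 2)) :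
    Integrable q (gaussianReal 0 1) := by
  rw [ProbabilityTheory.gaussianReal_of_var_ne_zero 0 one_ne_zero,
    integrable_withDensity_iff (ProbabilityTheory.measurable_gaussianPDF 0 1)
      (Filter.Eventually.of_forall fun x => by
        exact ENNReal.ofReal_lt_top)]
  have hpdf : ∀ x, ((ProbabilityTheory.gaussianPDF 0 1 x).toReal)
      = (Real.sqrt (2 * π))⁻¹ * Real.exp (-x ^ 2 / 2) := by
    intro x
    rw [ProbabilityTheory.gaussianPDF,
      ENNReal.toReal_ofReal (ProbabilityTheory.gaussianPDFReal_nonneg 0 1 x),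
      ProbabilityTheory.gaussianPDFReal]
    norm_num
  have hc : (0:ℝ) ≤ (Real.sqrt (2 * π))⁻¹ := by positivity
  refine Integrable.mono'
    ((integrable_exp_neg_mul_sq (show (0:ℝ) < 1/4 by norm_num)).const_mul
      ((Real.sqrt (2 * π))⁻¹ * 5)) ?_ (Filter.Eventually.of_forall fun x => ?_)
  · exact (hqm.mul ((ProbabilityTheory.measurable_gaussianPDF 0 1).ennreal_toReal))
      |>.aestronglyMeasurable
  · rw [Real.norm_eq_abs, hpdf, abs_mul]
    have : |(Real.sqrt (2 * π))⁻¹ * Real.exp (-x ^ 2 / 2)|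
        = (Real.sqrt (2 * π))⁻¹ * Real.exp (-x ^ 2 / 2) :=
      abs_of_nonneg (mul_nonneg hc (Real.exp_pos _).le)
    rw [this]
    have := hbd x
    calc |q x| * ((Real.sqrt (2 * π))⁻¹ * Real.exp (-x ^ 2 / 2))
        = (Real.sqrt (2 * π))⁻¹ * (|q x| * Real.exp (-x ^ 2 / 2)) := by ring
      _ ≤ (Real.sqrt (2 * π))⁻¹ * (5 * Real.exp (-(1/4) * x ^ 2)) :=
          mul_le_mul_of_nonneg_left (hbd x) hc
      _ = (Real.sqrt (2 * π))⁻¹ * 5 * Real.exp (-(1/4) * x ^ 2) := by ring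

lemma integrable_id_gaussian : Integrable (fun x : ℝ => x) (gaussianReal 0 1) :=
  integrable_gaussian _ measurable_id (fun x => by
    simpa using exp_quarter_bound_abs x)

lemma integrable_sq_gaussian : Integrable (fun x : ℝ => x ^ 2) (gaussianReal 0 1) :=
  integrable_gaussian _ (measurable_id.pow measurable_const) (fun x => by
    rw [abs_of_nonneg (sq_nonneg x)]; exact exp_quarter_bound_sq x)

end S5G

namespace S5B

variable {Ω : Type*} [MeasurableSpace Ω]
variable (N p : ℕ) (g : (q : ℕ) → (Fin q → Fin N) → Ω → ℝ)

lemma measurable_Hp (hm : ∀ q i, Measurable (g q i)) (q : ℕ) (σ : Config N) :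
    Measurable (fun ω => Hp N q (g q) σ ω) :=
  Measurable.const_mul
    (Finset.measurable_sum _ fun i _ => (hm q i).mul_const _) _

lemma abs_prod_spin (σ : Config N) (i : Fin p → Fin N) :
    |∏ k, spin (σ (i k))| = 1 := by
  rw [Finset.abs_prod]
  apply Finset.prod_eq_one
  intro k _
  cases σ (i k) <;> simp [spin]

lemma abs_Hp_le (σ : Config N) (ω : Ω) :
    |Hp N p (g p) σ ω| ≤ (N : ℝ) ^ (-(((p : ℝ) - 1) / 2)) * ∑ i, |g p i ω| := by
  have hc : (0:ℝ) ≤ (N : ℝ) ^ (-(((p : ℝ) - 1) / 2)) :=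
    Real.rpow_nonneg (Nat.cast_nonneg N) _
  rw [Hp, abs_mul, abs_of_nonneg hc]
  apply mul_le_mul_of_nonneg_left _ hc
  refine (Finset.abs_sum_le_sum_abs _ _).trans ?_
  apply Finset.sum_le_sum
  intro i _
  rw [abs_mul, abs_prod_spin N p, mul_one]

end S5B

/-- With `δ = β_p' − β_p > 0` and
`Δ_N = N⁻¹ ∫_{β_p}^{β_p'} E⟨(H_p(σ) − ⟨H_p(σ)⟩_x)²⟩_x dx`, one has
`N⁻¹ E⟨|H_p(σ) − ⟨H_p(σ)⟩|⟩ ≤ N⁻¹ E⟨|H_p(σ¹) − H_p(σ²)|⟩ ≤ 2√(Δ_N/(Nδ)) + 8Δ_N`,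
where the unsubscripted averages are at the original parameter `β_p`. -/
theorem statement5 {Ω : Type*} [MeasurableSpace Ω] (μ : Measure Ω) [IsProbabilityMeasure μ]
    (p : ℕ) (hp : 1 ≤ p) (β : ℕ → ℝ) (hβ : (Function.support β).Finite) (h : ℝ)
    (N : ℕ) (hN : 1 ≤ N)
    (g : (q : ℕ) → (Fin q → Fin N) → Ω → ℝ)
    (hg : IsGaussianDisorder N g μ)
    (βp' : ℝ) (hβp' : β p < βp') (δ : ℝ) (hδ : δ = βp' - β p)
    (Δ : ℝ)
    (hΔ : Δ = (N : ℝ)⁻¹ * ∫ x in (β p)..βp',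
      (∫ ω, gibbsAvg N (Function.update β p x) h g 1
        (fun σs ω' => (Hp N p (g p) (σs 0) ω' -
          gibbsAvg N (Function.update β p x) h g 1
            (fun τs ω'' => Hp N p (g p) (τs 0) ω'') ω') ^ 2) ω ∂μ)) :
    (N : ℝ)⁻¹ * (∫ ω, gibbsAvg N β h g 1
        (fun σs ω' => |Hp N p (g p) (σs 0) ω' -
          gibbsAvg N β h g 1 (fun τs ω'' => Hp N p (g p) (τs 0) ω'') ω'|) ω ∂μ) ≤
      (N : ℝ)⁻¹ * (∫ ω, gibbsAvg N β h g 2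
        (fun σs ω' => |Hp N p (g p) (σs 0) ω' - Hp N p (g p) (σs 1) ω'|) ω ∂μ) ∧
    (N : ℝ)⁻¹ * (∫ ω, gibbsAvg N β h g 2
        (fun σs ω' => |Hp N p (g p) (σs 0) ω' - Hp N p (g p) (σs 1) ω'|) ω ∂μ) ≤
      2 * Real.sqrt (Δ / (N * δ)) + 8 * Δ := by
  classical
  obtain ⟨hgm, hglaw, -⟩ := hg
  set c : ℝ := (N : ℝ) ^ (-(((p : ℝ) - 1) / 2)) with hc
  set T : Ω → ℝ := fun ω => c * ∑ i : Fin p → Fin N, |g p i ω| with hTdef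
  set Hf : Config N → Ω → ℝ := S5B.bH N p g with hHf
  set Cc : Config N → Ω → ℝ := S5B.bC N p β hβ h g with hCc
  have hHm : ∀ σ, Measurable (Hf σ) := fun σ => S5B.measurable_Hp N g hgm p σ
  have hCm : ∀ σ, Measurable (Cc σ) := fun σ => by
    rw [hCc]
    exact (Finset.measurable_sum _ fun q _ =>
      (S5B.measurable_Hp N g hgm q σ).const_mul (β q)).add measurable_const
  have hT : ∀ σ ω, |Hf σ ω| ≤ T ω := fun σ ω => S5B.abs_Hp_le N p g σ ω
  have hgi : ∀ i : Fin p → Fin N, Integrable (g p i) μ := by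
    intro i
    have h1 := S5G.integrable_id_gaussian
    rw [← hglaw p i] at h1
    exact (integrable_map_measure aestronglyMeasurable_id (hgm p i).aemeasurable).1 h1
  have hgi2 : ∀ i : Fin p → Fin N, Integrable (fun ω => (g p i ω) ^ 2) μ := by
    intro i
    have h1 := S5G.integrable_sq_gaussian
    rw [← hglaw p i] at h1
    exact (integrable_map_measure
      (measurable_id.pow measurable_const).aestronglyMeasurable (hgm p i).aemeasurable).1 h1
  have hTint : Integrable T μ :=
    (integrable_finset_sum _ fun i _ => (hgi i).abs).const_mul c
  have hS2 : Integrable (fun ω => (∑ i : Fin p → Fin N, |g p i ω|) ^ 2) μ := by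
    have hbd : Integrable (fun ω => ((Finset.univ : Finset (Fin p → Fin N)).card : ℝ)
        * ∑ i : Fin p → Fin N, (g p i ω) ^ 2) μ :=
      (integrable_finset_sum Finset.univ fun i _ => hgi2 i).const_mul _
    refine Integrable.mono' hbd
      (((Finset.measurable_sum _ fun i _ => (hgm p i).abs).pow
        measurable_const).aestronglyMeasurable)
      (Filter.Eventually.of_forall fun ω => ?_)
    rw [Real.norm_eq_abs, abs_of_nonneg (sq_nonneg _)]
    calc (∑ i : Fin p → Fin N, |g p i ω|) ^ 2
        ≤ ((Finset.univ : Finset (Fin p → Fin N)).card : ℝ)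
            * ∑ i : Fin p → Fin N, |g p i ω| ^ 2 := sq_sum_le_card_mul_sum_sq
      _ = ((Finset.univ : Finset (Fin p → Fin N)).card : ℝ)
            * ∑ i : Fin p → Fin N, (g p i ω) ^ 2 := by
          congr 1; exact Finset.sum_congr rfl fun i _ => sq_abs _
  have hT2int : Integrable (fun ω => T ω ^ 2) μ := by
    have heq : (fun ω => T ω ^ 2)
        = fun ω => c ^ 2 * (∑ i : Fin p → Fin N, |g p i ω|) ^ 2 := by
      funext ω; rw [hTdef]; ring
    rw [heq]
    exact hS2.const_mul _
  have hupd : Function.update β p (β p) = β := Function.update_eq_self p β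
  have eA : ∀ ω : Ω, gibbsAvg N β h g 1
      (fun σs ω' => |Hp N p (g p) (σs 0) ω' -
        gibbsAvg N β h g 1 (fun τs ω'' => Hp N p (g p) (τs 0) ω'') ω'|) ω
      = S5.gA Hf Cc (β p) ω := fun ω => by
    have := S5B.avg_abs N p β hβ h g (β p) ω
    rwa [hupd] at this
  have eD : ∀ ω : Ω, gibbsAvg N β h g 2
      (fun σs ω' => |Hp N p (g p) (σs 0) ω' - Hp N p (g p) (σs 1) ω'|) ω
      = S5.gD Hf Cc (β p) ω := fun ω => by
    have := S5B.avg_absdiff N p β hβ h g (β p) ω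
    rwa [hupd] at this
  have hAbar : (∫ ω, gibbsAvg N β h g 1
      (fun σs ω' => |Hp N p (g p) (σs 0) ω' -
        gibbsAvg N β h g 1 (fun τs ω'' => Hp N p (g p) (τs 0) ω'') ω'|) ω ∂μ)
      = S5.Abar Hf Cc μ (β p) := by
    rw [S5.Abar]
    exact integral_congr_ae (Filter.Eventually.of_forall eA)
  have hDbar : (∫ ω, gibbsAvg N β h g 2
      (fun σs ω' => |Hp N p (g p) (σs 0) ω' - Hp N p (g p) (σs 1) ω'|) ω ∂μ)
      = S5.Dbar Hf Cc μ (β p) := by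
    rw [S5.Dbar]
    exact integral_congr_ae (Filter.Eventually.of_forall eD)
  have hΔ' : Δ = (N : ℝ)⁻¹ * ∫ x in (β p)..βp', S5.Vbar Hf Cc μ x := by
    rw [hΔ]
    congr 1
    apply intervalIntegral.integral_congr
    intro x _
    rw [S5.Vbar]
    exact integral_congr_ae (Filter.Eventually.of_forall fun ω =>
      S5B.avg_sq N p β hβ h g x ω)
  have hNpos : (0:ℝ) < (N : ℝ) := by
    have : 0 < N := hN
    exact_mod_cast this
  obtain ⟨h1, h2⟩ := S5.abstract_main μ hHm hCm hT hTint hT2int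
    (β p) βp' hβp' (N : ℝ) hNpos Δ hΔ'
  constructor
  · rw [hAbar, hDbar]
    exact h1
  · rw [hDbar, hδ]
    exact h2
end
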